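/- arXiv:2106.02534 — 5 statements merged into one kernel-verified Lean document; each statement's English description precedes it below -/
import Mathlib

section
/- For every integer n ≥ 4, the number of cyclic permutations of length n avoiding both cyclic patterns [1243] and [1342] equals 4; that is, #Av_n([1243],[1342]) = 4. -/
/-- A sequence `σ` of length `n` (with distinct values) contains the pattern `π`
of length `k` if some subsequence of `σ` is order isomorphic to `π`. -/
def ContainsPat {n k : ℕ} (σ : Fin n → Fin n) (π : Fin k → ℕ) : Prop :=
  ∃ f : Fin k → Fin n, StrictMono f ∧ ∀ i j : Fin k, π i < π j ↔ σ (f i) < σ (f j)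

/-- The rotation of the sequence `σ` starting at position `r`. -/
def rotSeq {n : ℕ} (σ : Fin n → Fin n) (r : Fin n) : Fin n → Fin n :=
  fun i => σ (i + r)

/-- The cyclic permutation `[σ]` contains the cyclic pattern `[π]` if some
rotation of `σ` contains `π` linearly. -/
def CycContains {n k : ℕ} (σ : Fin n → Fin n) (π : Fin k → ℕ) : Prop :=
  ∃ r : Fin n, ContainsPat (rotSeq σ r) π

/-- The cyclic permutation `[σ]` avoids the cyclic pattern `[π]`. -/
def CycAvoids {n k : ℕ} (σ : Fin n → Fin n) (π : Fin k → ℕ) : Prop :=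
  ¬ CycContains σ π

/-- The cyclic permutation `[σ]`, i.e. the set of all rotations of `σ`. -/
def CycClass {n : ℕ} (σ : Fin n → Fin n) : Set (Fin n → Fin n) :=
  Set.range (rotSeq σ)

/-- The set of cyclic permutations (rotation classes) of length `n` all of whose
representatives are permutations and which satisfy the (rotation-invariant)
predicate `P`. -/
def AvClasses (n : ℕ) (P : (Fin n → Fin n) → Prop) : Set (Set (Fin n → Fin n)) :=
  { C | ∃ σ : Equiv.Perm (Fin n), C = CycClass ⇑σ ∧ P ⇑σ }

/-- The cyclic descent number: the number of indices `i` (mod `n`) with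
`σ i > σ (i+1)`. -/
def cdes {n : ℕ} (σ : Fin n → Fin n) : ℕ :=
  (Finset.univ.filter fun i : Fin n =>
    σ ⟨(↑i + 1) % n, Nat.mod_lt _ i.pos⟩ < σ i).card

/-- The cyclic peak number: the number of indices `i` (mod `n`) with
`σ (i-1) < σ i > σ (i+1)`. -/
def cpk {n : ℕ} (σ : Fin n → Fin n) : ℕ :=
  (Finset.univ.filter fun i : Fin n =>
    σ ⟨(↑i + (n - 1)) % n, Nat.mod_lt _ i.pos⟩ < σ i ∧
    σ ⟨(↑i + 1) % n, Nat.mod_lt _ i.pos⟩ < σ i).card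

set_option linter.unusedVariables false

namespace AvAux

variable {n : ℕ}


def Bad {n : ℕ} (τ : Fin n → Fin n) : Prop :=
  ∃ p0 p1 p2 p3 : Fin n, p0 < p1 ∧ p1 < p2 ∧ p2 < p3 ∧
    τ p0 < τ p1 ∧ τ p1 < τ p2 ∧ τ p0 < τ p3 ∧ τ p3 < τ p2

variable {n : ℕ}

lemma bad_of_contains₁ {τ : Fin n → Fin n} (h : ContainsPat τ ![1,2,4,3]) : Bad τ := by
  obtain ⟨f, hf, hiff⟩ := h
  exact ⟨f 0, f 1, f 2, f 3, hf (by decide), hf (by decide), hf (by decide),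
    (hiff 0 1).mp (by decide), (hiff 1 2).mp (by decide),
    (hiff 0 3).mp (by decide), (hiff 3 2).mp (by decide)⟩

lemma bad_of_contains₂ {τ : Fin n → Fin n} (h : ContainsPat τ ![1,3,4,2]) : Bad τ := by
  obtain ⟨f, hf, hiff⟩ := h
  exact ⟨f 0, f 1, f 2, f 3, hf (by decide), hf (by decide), hf (by decide),
    (hiff 0 1).mp (by decide), (hiff 1 2).mp (by decide),
    (hiff 0 3).mp (by decide), (hiff 3 2).mp (by decide)⟩

lemma contains_of_bad {τ : Fin n → Fin n} (hinj : Function.Injective τ) (hb : Bad τ) :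
    ContainsPat τ ![1,2,4,3] ∨ ContainsPat τ ![1,3,4,2] := by
  obtain ⟨p0, p1, p2, p3, h01, h12, h23, v01, v12, v03, v32⟩ := hb
  have hne : τ p1 ≠ τ p3 := fun h => absurd (hinj h) (by intro h'; rw [h'] at h12; exact absurd h23 (not_lt.mpr h12.le))
  have hmono : StrictMono ![p0, p1, p2, p3] := by
    intro i j hij
    fin_cases i <;> fin_cases j <;>
      simp_all <;> omega
  rcases lt_or_gt_of_ne hne with h13 | h31
  · left
    refine ⟨![p0, p1, p2, p3], hmono, ?_⟩
    intro i j
    simp only [Fin.lt_def] at v01 v12 v03 v32 h13 ⊢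
    fin_cases i <;> fin_cases j <;> simp <;> omega
  · right
    refine ⟨![p0, p1, p2, p3], hmono, ?_⟩
    intro i j
    simp only [Fin.lt_def] at v01 v12 v03 v32 h31 ⊢
    fin_cases i <;> fin_cases j <;> simp <;> omega





lemma rot_rot (σ : Fin n → Fin n) (r s : Fin n) : rotSeq (rotSeq σ r) s = rotSeq σ (s + r) := by
  funext i; simp [rotSeq, add_assoc]

lemma rotSeq_zero [NeZero n] (σ : Fin n → Fin n) : rotSeq σ 0 = σ := by
  funext i; simp [rotSeq]

lemma cycClass_rot [NeZero n] (σ : Fin n → Fin n) (r : Fin n) :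
    CycClass (rotSeq σ r) = CycClass σ := by
  ext τ; constructor
  · rintro ⟨s, rfl⟩; exact ⟨s + r, (rot_rot σ r s).symm⟩
  · rintro ⟨t, rfl⟩; exact ⟨t - r, by rw [rot_rot, sub_add_cancel]⟩

-- the four words
def g1 (n q : ℕ) : ℕ := q
def g2 (n q : ℕ) : ℕ := if q = 0 then 0 else if q = n - 1 then n - 1 else n - 1 - q
def g3 (n q : ℕ) : ℕ := if q = 0 then 0 else if q = 1 then n - 1 else q - 1
def g4 (n q : ℕ) : ℕ := if q = 0 then 0 else n - q

def w1 (n : ℕ) : Fin n → Fin n := fun i => ⟨g1 n i.val, by have := i.isLt; unfold g1; omega⟩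
def w2 (n : ℕ) : Fin n → Fin n := fun i => ⟨g2 n i.val, by have := i.isLt; unfold g2; split_ifs <;> omega⟩
def w3 (n : ℕ) : Fin n → Fin n := fun i => ⟨g3 n i.val, by have := i.isLt; unfold g3; split_ifs <;> omega⟩
def w4 (n : ℕ) : Fin n → Fin n := fun i => ⟨g4 n i.val, by have := i.isLt; unfold g4; split_ifs <;> omega⟩

lemma g1_char (hn : 4 ≤ n) {q : ℕ} (hq : q < n) : g1 n q = q := rfl

lemma g2_char (hn : 4 ≤ n) {q : ℕ} (hq : q < n) :
    (q = 0 ∧ g2 n q = 0) ∨ (q = n - 1 ∧ g2 n q = n - 1) ∨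
      (1 ≤ q ∧ q ≤ n - 2 ∧ g2 n q = n - 1 - q) := by
  unfold g2; split_ifs <;> omega

lemma g3_char (hn : 4 ≤ n) {q : ℕ} (hq : q < n) :
    (q = 0 ∧ g3 n q = 0) ∨ (q = 1 ∧ g3 n q = n - 1) ∨
      (2 ≤ q ∧ q ≤ n - 1 ∧ g3 n q = q - 1) := by
  unfold g3; split_ifs <;> omega

lemma g4_char (hn : 4 ≤ n) {q : ℕ} (hq : q < n) :
    (q = 0 ∧ g4 n q = 0) ∨ (1 ≤ q ∧ q ≤ n - 1 ∧ g4 n q = n - q) := by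
  unfold g4; split_ifs <;> omega

lemma mod_cases (a n : ℕ) (hn : 0 < n) (h : a < 2 * n) : a % n = a ∨ a % n + n = a := by
  rcases Nat.lt_or_ge a n with h' | h'
  · left; exact Nat.mod_eq_of_lt h'
  · right
    have h2 : a % n = a - n := by
      rw [Nat.mod_eq_sub_mod h', Nat.mod_eq_of_lt (by omega)]
    omega



lemma avoid2 (hn : 4 ≤ n) (r : Fin n) : ¬ Bad (rotSeq (w2 n) r) := by
  rintro ⟨p0, p1, p2, p3, h01, h12, h23, v01, v12, v03, v32⟩
  have hn0 : 0 < n := by omega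
  simp only [rotSeq, w2, Fin.lt_def, Fin.val_add] at h01 h12 h23 v01 v12 v03 v32
  have b0 := p0.isLt; have b1 := p1.isLt; have b2 := p2.isLt; have b3 := p3.isLt
  have br := r.isLt
  have m0 := mod_cases (p0.val + r.val) n hn0 (by omega)
  have m1 := mod_cases (p1.val + r.val) n hn0 (by omega)
  have m2 := mod_cases (p2.val + r.val) n hn0 (by omega)
  have m3 := mod_cases (p3.val + r.val) n hn0 (by omega)
  have c0 := g2_char hn (Nat.mod_lt (p0.val + r.val) hn0)
  have c1 := g2_char hn (Nat.mod_lt (p1.val + r.val) hn0)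
  have c2 := g2_char hn (Nat.mod_lt (p2.val + r.val) hn0)
  have c3 := g2_char hn (Nat.mod_lt (p3.val + r.val) hn0)
  omega



lemma avoid1 (hn : 4 ≤ n) (r : Fin n) : ¬ Bad (rotSeq (w1 n) r) := by
  rintro ⟨p0, p1, p2, p3, h01, h12, h23, v01, v12, v03, v32⟩
  have hn0 : 0 < n := by omega
  simp only [rotSeq, w1, g1, Fin.lt_def, Fin.val_add] at h01 h12 h23 v01 v12 v03 v32
  have b0 := p0.isLt; have b1 := p1.isLt; have b2 := p2.isLt; have b3 := p3.isLt
  have br := r.isLt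
  have m0 := mod_cases (p0.val + r.val) n hn0 (by omega)
  have m1 := mod_cases (p1.val + r.val) n hn0 (by omega)
  have m2 := mod_cases (p2.val + r.val) n hn0 (by omega)
  have m3 := mod_cases (p3.val + r.val) n hn0 (by omega)
  have l0 := Nat.mod_lt (p0.val + r.val) hn0
  have l1 := Nat.mod_lt (p1.val + r.val) hn0
  have l2 := Nat.mod_lt (p2.val + r.val) hn0
  have l3 := Nat.mod_lt (p3.val + r.val) hn0
  omega

lemma avoid3 (hn : 4 ≤ n) (r : Fin n) : ¬ Bad (rotSeq (w3 n) r) := by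
  rintro ⟨p0, p1, p2, p3, h01, h12, h23, v01, v12, v03, v32⟩
  have hn0 : 0 < n := by omega
  simp only [rotSeq, w3, Fin.lt_def, Fin.val_add] at h01 h12 h23 v01 v12 v03 v32
  have b0 := p0.isLt; have b1 := p1.isLt; have b2 := p2.isLt; have b3 := p3.isLt
  have br := r.isLt
  have m0 := mod_cases (p0.val + r.val) n hn0 (by omega)
  have m1 := mod_cases (p1.val + r.val) n hn0 (by omega)
  have m2 := mod_cases (p2.val + r.val) n hn0 (by omega)
  have m3 := mod_cases (p3.val + r.val) n hn0 (by omega)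
  have c0 := g3_char hn (Nat.mod_lt (p0.val + r.val) hn0)
  have c1 := g3_char hn (Nat.mod_lt (p1.val + r.val) hn0)
  have c2 := g3_char hn (Nat.mod_lt (p2.val + r.val) hn0)
  have c3 := g3_char hn (Nat.mod_lt (p3.val + r.val) hn0)
  omega

lemma avoid4 (hn : 4 ≤ n) (r : Fin n) : ¬ Bad (rotSeq (w4 n) r) := by
  rintro ⟨p0, p1, p2, p3, h01, h12, h23, v01, v12, v03, v32⟩
  have hn0 : 0 < n := by omega
  simp only [rotSeq, w4, Fin.lt_def, Fin.val_add] at h01 h12 h23 v01 v12 v03 v32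
  have b0 := p0.isLt; have b1 := p1.isLt; have b2 := p2.isLt; have b3 := p3.isLt
  have br := r.isLt
  have m0 := mod_cases (p0.val + r.val) n hn0 (by omega)
  have m1 := mod_cases (p1.val + r.val) n hn0 (by omega)
  have m2 := mod_cases (p2.val + r.val) n hn0 (by omega)
  have m3 := mod_cases (p3.val + r.val) n hn0 (by omega)
  have c0 := g4_char hn (Nat.mod_lt (p0.val + r.val) hn0)
  have c1 := g4_char hn (Nat.mod_lt (p1.val + r.val) hn0)
  have c2 := g4_char hn (Nat.mod_lt (p2.val + r.val) hn0)
  have c3 := g4_char hn (Nat.mod_lt (p3.val + r.val) hn0)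
  omega



lemma key (k : ℕ) (h : ℕ → ℕ)
    (mono : ∀ i j, i < j → j < k → h i < h j)
    (hb : ∀ i, i < k → 1 ≤ h i ∧ h i ≤ k) :
    ∀ i, i < k → h i = i + 1 := by
  have lower : ∀ i, i < k → i + 1 ≤ h i := by
    intro i
    induction i with
    | zero => intro h0; exact (hb 0 h0).1
    | succ i ih =>
      intro hik
      have h1 := ih (by omega)
      have h2 := mono i (i+1) (by omega) hik
      omega
  have upper : ∀ d, d < k → h (k - 1 - d) ≤ k - d := by
    intro d
    induction d with
    | zero =>
      intro h0
      have := (hb (k-1) (by omega)).2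
      simpa using this
    | succ d ih =>
      intro hdk
      have h1 := ih (by omega)
      have h2 := mono (k - 1 - (d+1)) (k - 1 - d) (by omega) (by omega)
      omega
  intro i hik
  have h1 := lower i hik
  have h2 := upper (k - 1 - i) (by omega)
  have h3 : k - 1 - (k - 1 - i) = i := by omega
  rw [h3] at h2
  omega

lemma tri (T : ℕ → ℕ) (s t : ℕ) (hst : s < t)
    (inj : ∀ p q, s ≤ p → p ≤ t → s ≤ q → q ≤ t → T p = T q → p = q)
    (hA : ∀ i j k, s ≤ i → i < j → j < k → k ≤ t → T i < T j → T k < T j → False)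
    (hB : ∀ a i j, s ≤ a → a < i → i < j → j ≤ t → T i < T a → T i < T j → False) :
    (∀ i j, s ≤ i → i < j → j ≤ t → T i < T j) ∨
    (∀ i j, s ≤ i → i < j → j ≤ t → T j < T i) := by
  have hne : ∀ p q, s ≤ p → p ≤ t → s ≤ q → q ≤ t → p ≠ q → T p ≠ T q := by
    intro p q hp hp' hq hq' hpq h
    exact hpq (inj p q hp hp' hq hq' h)
  rcases lt_trichotomy (T s) (T (s+1)) with hbase | hbase | hbase
  · left
    have C : ∀ k, s + 1 < k → k ≤ t → T (s+1) < T k := by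
      intro k h1 h2
      have h3 : ¬ T k < T (s+1) := fun hlt => hA s (s+1) k le_rfl (by omega) h1 h2 hbase hlt
      have h4 := hne (s+1) k (by omega) (by omega) (by omega) h2 (by omega)
      omega
    have Cs : ∀ k, s < k → k ≤ t → T s < T k := by
      intro k h1 h2
      rcases eq_or_lt_of_le (show s + 1 ≤ k by omega) with h | h
      · rw [← h]; exact hbase
      · exact lt_trans hbase (C k h h2)
    intro i j hi hij hj
    rcases eq_or_lt_of_le hi with h | h
    · rw [← h]; exact Cs j (by omega) hj
    · have hTi : T s < T i := Cs i h (by omega)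
      have h3 : ¬ T j < T i := fun hlt => hA s i j le_rfl h (by omega) hj hTi hlt
      have h4 := hne i j (by omega) (by omega) (by omega) hj (by omega)
      omega
  · exact absurd (inj s (s+1) le_rfl (by omega) (by omega) (by omega) hbase) (by omega)
  · right
    have C : ∀ k, s + 1 < k → k ≤ t → T k < T (s+1) := by
      intro k h1 h2
      have h3 : ¬ T (s+1) < T k := fun hlt => hB s (s+1) k le_rfl (by omega) h1 h2 hbase hlt
      have h4 := hne (s+1) k (by omega) (by omega) (by omega) h2 (by omega)
      omega
    have Cs : ∀ k, s < k → k ≤ t → T k < T s := by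
      intro k h1 h2
      rcases eq_or_lt_of_le (show s + 1 ≤ k by omega) with h | h
      · rw [← h]; exact hbase
      · exact lt_trans (C k h h2) hbase
    intro i j hi hij hj
    rcases eq_or_lt_of_le hi with h | h
    · rw [← h]; exact Cs j (by omega) hj
    · have hTi : T i < T s := Cs i h (by omega)
      have h3 : ¬ T i < T j := fun hlt => hB s i j le_rfl h (by omega) hj hTi hlt
      have h4 := hne i j (by omega) (by omega) (by omega) hj (by omega)
      omega



lemma classify (hn : 4 ≤ n) [NeZero n] (τ : Fin n → Fin n) (hinj : Function.Injective τ)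
    (h0 : τ 0 = 0) (hb : ∀ s : Fin n, ¬ Bad (rotSeq τ s)) :
    τ = w1 n ∨ τ = w2 n ∨ τ = w3 n ∨ τ = w4 n := by
  have hn0 : 0 < n := by omega
  set T : ℕ → ℕ := fun p => (τ ⟨p % n, Nat.mod_lt _ hn0⟩).val with hT
  have hTval : ∀ x : Fin n, (τ x).val = T x.val := by
    intro x
    have hx : (⟨x.val % n, Nat.mod_lt _ hn0⟩ : Fin n) = x := Fin.ext (Nat.mod_eq_of_lt x.isLt)
    simp [hT, hx]
  have hTlt : ∀ p, T p < n := fun p => (τ _).isLt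
  have hTcomp : ∀ p, T (p % n) = T p := by
    intro p; simp [hT, Nat.mod_mod_of_dvd]
  have hTmod : ∀ p, T (n + p) = T p := by
    intro p; simp [hT, Nat.add_mod_left]
  have hTinj : ∀ p q, p < n → q < n → T p = T q → p = q := by
    intro p q hp hq h
    have h2 : τ ⟨p % n, Nat.mod_lt _ hn0⟩ = τ ⟨q % n, Nat.mod_lt _ hn0⟩ := Fin.ext h
    have h4 : p % n = q % n := congrArg Fin.val (hinj h2)
    rwa [Nat.mod_eq_of_lt hp, Nat.mod_eq_of_lt hq] at h4
  have hT0 : T 0 = 0 := by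
    have hx : (⟨0 % n, Nat.mod_lt _ hn0⟩ : Fin n) = 0 := Fin.ext (by simp)
    show (τ ⟨0 % n, Nat.mod_lt _ hn0⟩).val = 0
    rw [hx, h0]
    simp
  obtain ⟨x, hx⟩ := (Finite.injective_iff_bijective.mp hinj).2 ⟨n - 1, by omega⟩
  set m := x.val with hmdef
  have hm : m < n := x.isLt
  have hTm : T m = n - 1 := by rw [← hTval, hx]
  have BQ : ∀ s p0 p1 p2 p3 : ℕ, s < n → p0 < p1 → p1 < p2 → p2 < p3 → p3 < n →
      T (p0+s) < T (p1+s) → T (p1+s) < T (p2+s) → T (p0+s) < T (p3+s) →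
      T (p3+s) < T (p2+s) → False := by
    intro s p0 p1 p2 p3 hs h01 h12 h23 h3n a b c d
    apply hb ⟨s, hs⟩
    have kv : ∀ p (hp : p < n), (rotSeq τ ⟨s, hs⟩ ⟨p, hp⟩).val = T (p + s) := by
      intro p hp
      have he : (⟨p, hp⟩ + ⟨s, hs⟩ : Fin n) = ⟨(p + s) % n, Nat.mod_lt _ hn0⟩ := by
        refine Fin.ext ?_
        simp [Fin.add_def]
      show (τ (⟨p, hp⟩ + ⟨s, hs⟩)).val = T (p + s)
      rw [he, hTval]
      exact hTcomp (p + s)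
    refine ⟨⟨p0, by omega⟩, ⟨p1, by omega⟩, ⟨p2, by omega⟩, ⟨p3, h3n⟩,
      Fin.mk_lt_mk.mpr h01, Fin.mk_lt_mk.mpr h12, Fin.mk_lt_mk.mpr h23, ?_, ?_, ?_, ?_⟩
    · rw [Fin.lt_def, kv, kv]; exact a
    · rw [Fin.lt_def, kv, kv]; exact b
    · rw [Fin.lt_def, kv, kv]; exact c
    · rw [Fin.lt_def, kv, kv]; exact d
  have hpos : ∀ p, 0 < p → p < n → 0 < T p := by
    intro p hp0 hpn
    rcases Nat.eq_zero_or_pos (T p) with h | h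
    · exact absurd (hTinj p 0 hpn hn0 (by rw [h, hT0])) (by omega)
    · exact h
  have hltm : ∀ p, p < n → p ≠ m → T p < n - 1 := by
    intro p hpn hpm
    have h1 := hTlt p
    rcases eq_or_ne (T p) (n - 1) with h | h
    · exact absurd (hTinj p m hpn hm (by rw [h, hTm])) hpm
    · omega
  have hm0 : m ≠ 0 := by intro h; rw [h, hT0] at hTm; omega
  have LemA : ∀ i j k, 0 < i → i < j → j < k → k < n → T i < T j → T k < T j → False := by
    intro i j k hi hij hjk hkn hv1 hv2
    apply BQ 0 0 i j k hn0 (by omega) hij hjk hkn <;> simp only [Nat.add_zero]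
    · rw [hT0]; exact hpos i hi (by omega)
    · exact hv1
    · rw [hT0]; exact hpos k (by omega) hkn
    · exact hv2
  have hmcase : m = 1 ∨ m = n - 1 := by
    by_contra hc
    push_neg at hc
    obtain ⟨hc1, hc2⟩ := hc
    apply BQ 0 0 1 m (n-1) hn0 (by omega) (by omega) (by omega) (by omega) <;>
      simp only [Nat.add_zero]
    · rw [hT0]; exact hpos 1 (by omega) (by omega)
    · rw [hTm]; exact hltm 1 (by omega) (by omega)
    · rw [hT0]; exact hpos (n-1) (by omega) (by omega)
    · rw [hTm]; exact hltm (n-1) (by omega) (by omega)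
  rcases hmcase with hm1 | hm1
  · -- m = 1 : τ = w3 or w4
    have hT1 : T 1 = n - 1 := by have h := hTm; rwa [hm1] at h
    have LemB : ∀ a i j, 2 ≤ a → a < i → i < j → j ≤ n-1 → T i < T a → T i < T j → False := by
      intro a i j ha hai hij hj hv1 hv2
      apply BQ i 0 (j-i) (n+1-i) (n+a-i) (by omega) (by omega) (by omega) (by omega) (by omega)
      · rw [show 0+i=i by omega, show j-i+i=j by omega]; exact hv2
      · rw [show j-i+i=j by omega, show n+1-i+i = n+1 by omega, hTmod 1, hT1]
        exact hltm j (by omega) (by omega)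
      · rw [show 0+i=i by omega, show n+a-i+i=n+a by omega, hTmod a]; exact hv1
      · rw [show n+a-i+i=n+a by omega, show n+1-i+i=n+1 by omega, hTmod a, hTmod 1, hT1]
        exact hltm a (by omega) (by omega)
    rcases tri T 2 (n-1) (by omega)
        (fun p q hp hp' hq hq' h => hTinj p q (by omega) (by omega) h)
        (fun i j k hi hij hjk hk hv1 hv2 => LemA i j k (by omega) hij hjk (by omega) hv1 hv2)
        LemB with Asc | Desc
    · right; right; left
      have hmid : ∀ p, 2 ≤ p → p ≤ n - 1 → T p = p - 1 := by
        have K := key (n-2) (fun i => T (i+2))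
          (fun i j hij hj => Asc (i+2) (j+2) (by omega) (by omega) (by omega))
          (fun i hi => ⟨hpos (i+2) (by omega) (by omega), by
            have := hltm (i+2) (by omega) (by omega)
            show T (i+2) ≤ n - 2
            omega⟩)
        intro p hp1 hp2
        have h2 : T (p - 2 + 2) = (p - 2) + 1 := K (p-2) (by omega)
        rw [show p - 2 + 2 = p by omega] at h2
        omega
      funext x
      refine Fin.ext ?_
      rw [hTval]
      show T x.val = g3 n x.val
      rcases g3_char hn x.isLt with ⟨h1,h2⟩|⟨h1,h2⟩|⟨h1,h1',h2⟩
      · rw [h2, h1, hT0]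
      · rw [h2, h1, hT1]
      · rw [h2]; exact hmid x.val h1 h1'
    · right; right; right
      have hmid : ∀ p, 2 ≤ p → p ≤ n - 1 → T p = n - p := by
        have K := key (n-2) (fun i => T (n-1-i))
          (fun i j hij hj => Desc (n-1-j) (n-1-i) (by omega) (by omega) (by omega))
          (fun i hi => ⟨hpos (n-1-i) (by omega) (by omega), by
            have := hltm (n-1-i) (by omega) (by omega)
            show T (n-1-i) ≤ n - 2
            omega⟩)
        intro p hp1 hp2
        have h2 : T (n-1-(n-1-p)) = (n-1-p) + 1 := K (n-1-p) (by omega)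
        rw [show n-1-(n-1-p) = p by omega] at h2
        omega
      funext x
      refine Fin.ext ?_
      rw [hTval]
      show T x.val = g4 n x.val
      rcases g4_char hn x.isLt with ⟨h1,h2⟩|⟨h1,h1',h2⟩
      · rw [h2, h1, hT0]
      · rw [h2]
        rcases eq_or_lt_of_le h1 with h | h
        · rw [← h, hT1]
        · exact hmid x.val (by omega) h1'
  · -- m = n-1 : τ = w1 or w2
    have hTn1 : T (n-1) = n - 1 := by have h := hTm; rwa [hm1] at h
    have LemB : ∀ a i j, 1 ≤ a → a < i → i < j → j ≤ n-2 → T i < T a → T i < T j → False := by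
      intro a i j ha hai hij hj hv1 hv2
      apply BQ i 0 (j-i) (n-1-i) (n+a-i) (by omega) (by omega) (by omega) (by omega) (by omega)
      · rw [show 0+i=i by omega, show j-i+i=j by omega]; exact hv2
      · rw [show j-i+i=j by omega, show n-1-i+i = n-1 by omega, hTn1]
        exact hltm j (by omega) (by omega)
      · rw [show 0+i=i by omega, show n+a-i+i=n+a by omega, hTmod a]; exact hv1
      · rw [show n+a-i+i=n+a by omega, show n-1-i+i=n-1 by omega, hTmod a, hTn1]
        exact hltm a (by omega) (by omega)
    rcases tri T 1 (n-2) (by omega)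
        (fun p q hp hp' hq hq' h => hTinj p q (by omega) (by omega) h)
        (fun i j k hi hij hjk hk hv1 hv2 => LemA i j k (by omega) hij hjk (by omega) hv1 hv2)
        LemB with Asc | Desc
    · left
      have hmid : ∀ p, 1 ≤ p → p ≤ n - 2 → T p = p := by
        have K := key (n-2) (fun i => T (i+1))
          (fun i j hij hj => Asc (i+1) (j+1) (by omega) (by omega) (by omega))
          (fun i hi => ⟨hpos (i+1) (by omega) (by omega), by
            have := hltm (i+1) (by omega) (by omega)
            show T (i+1) ≤ n - 2
            omega⟩)
        intro p hp1 hp2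
        have h2 : T (p - 1 + 1) = (p - 1) + 1 := K (p-1) (by omega)
        rw [show p - 1 + 1 = p by omega] at h2
        omega
      funext x
      refine Fin.ext ?_
      rw [hTval]
      show T x.val = g1 n x.val
      unfold g1
      rcases Nat.eq_zero_or_pos x.val with h | h
      · rw [h, hT0]
      · rcases eq_or_ne x.val (n-1) with h' | h'
        · rw [h', hTn1]
        · exact hmid x.val (by omega) (by have := x.isLt; omega)
    · right; left
      have hmid : ∀ p, 1 ≤ p → p ≤ n - 2 → T p = n - 1 - p := by
        have K := key (n-2) (fun i => T (n-2-i))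
          (fun i j hij hj => Desc (n-2-j) (n-2-i) (by omega) (by omega) (by omega))
          (fun i hi => ⟨hpos (n-2-i) (by omega) (by omega), by
            have := hltm (n-2-i) (by omega) (by omega)
            show T (n-2-i) ≤ n - 2
            omega⟩)
        intro p hp1 hp2
        have h2 : T (n-2-(n-2-p)) = (n-2-p) + 1 := K (n-2-p) (by omega)
        rw [show n-2-(n-2-p) = p by omega] at h2
        omega
      funext x
      refine Fin.ext ?_
      rw [hTval]
      show T x.val = g2 n x.val
      rcases g2_char hn x.isLt with ⟨h1,h2⟩|⟨h1,h2⟩|⟨h1,h1',h2⟩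
      · rw [h2, h1, hT0]
      · rw [h2, h1, hTn1]
      · rw [h2]; exact hmid x.val h1 h1'


end AvAux

namespace AvAux
variable {n : ℕ}

lemma avoids_iff (σ : Fin n → Fin n) (hinj : Function.Injective σ) :
    (CycAvoids σ ![1,2,4,3] ∧ CycAvoids σ ![1,3,4,2]) ↔ ∀ r, ¬ Bad (rotSeq σ r) := by
  constructor
  · rintro ⟨h1, h2⟩ r hbad
    have hinj' : Function.Injective (rotSeq σ r) := fun a b h => by
      have h3 := hinj h
      exact add_right_cancel h3
    rcases contains_of_bad hinj' hbad with h | h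
    · exact h1 ⟨r, h⟩
    · exact h2 ⟨r, h⟩
  · intro h
    constructor
    · rintro ⟨r, hc⟩; exact h r (bad_of_contains₁ hc)
    · rintro ⟨r, hc⟩; exact h r (bad_of_contains₂ hc)

lemma class_eq_fun [NeZero n] (w w' : Fin n → Fin n) (hinj : Function.Injective w)
    (h0 : w 0 = 0) (h0' : w' 0 = 0) (h : CycClass w = CycClass w') : w = w' := by
  have hmem : w' ∈ CycClass w := by rw [h]; exact ⟨0, rotSeq_zero w'⟩
  obtain ⟨r, hr⟩ := hmem
  have h2 : w r = 0 := by
    have h3 : rotSeq w r 0 = w' 0 := by rw [hr]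
    rw [h0'] at h3
    simpa [rotSeq] using h3
  have hr0 : r = 0 := hinj (by rw [h2, h0])
  rw [← hr, hr0, rotSeq_zero]

end AvAux


theorem card_av_1243_1342 (n : ℕ) (hn : 4 ≤ n) :
    (AvClasses n fun σ => CycAvoids σ ![1,2,4,3] ∧ CycAvoids σ ![1,3,4,2]).ncard = 4 := by
  classical
  haveI : NeZero n := ⟨by omega⟩
  have hinj1 : Function.Injective (AvAux.w1 n) := fun a b h => Fin.ext (congrArg Fin.val h)
  have hinj2 : Function.Injective (AvAux.w2 n) := by
    intro a b h
    have h2 : AvAux.g2 n a.val = AvAux.g2 n b.val := congrArg Fin.val h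
    have c1 := AvAux.g2_char hn a.isLt
    have c2 := AvAux.g2_char hn b.isLt
    exact Fin.ext (by omega)
  have hinj3 : Function.Injective (AvAux.w3 n) := by
    intro a b h
    have h2 : AvAux.g3 n a.val = AvAux.g3 n b.val := congrArg Fin.val h
    have c1 := AvAux.g3_char hn a.isLt
    have c2 := AvAux.g3_char hn b.isLt
    exact Fin.ext (by omega)
  have hinj4 : Function.Injective (AvAux.w4 n) := by
    intro a b h
    have h2 : AvAux.g4 n a.val = AvAux.g4 n b.val := congrArg Fin.val h
    have c1 := AvAux.g4_char hn a.isLt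
    have c2 := AvAux.g4_char hn b.isLt
    exact Fin.ext (by omega)
  have hz1 : AvAux.w1 n 0 = 0 := by refine Fin.ext ?_; simp [AvAux.w1, AvAux.g1]
  have hz2 : AvAux.w2 n 0 = 0 := by refine Fin.ext ?_; simp [AvAux.w2, AvAux.g2]
  have hz3 : AvAux.w3 n 0 = 0 := by refine Fin.ext ?_; simp [AvAux.w3, AvAux.g3]
  have hz4 : AvAux.w4 n 0 = 0 := by refine Fin.ext ?_; simp [AvAux.w4, AvAux.g4]
  have e1 : AvAux.g1 n 1 = 1 := rfl
  have e2 : AvAux.g2 n 1 = n - 2 := by unfold AvAux.g2; rw [if_neg (by omega), if_neg (by omega)]; omega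
  have e3 : AvAux.g3 n 1 = n - 1 := by unfold AvAux.g3; rw [if_neg (by omega), if_pos rfl]
  have e4 : AvAux.g4 n 1 = n - 1 := by unfold AvAux.g4; rw [if_neg (by omega)]
  have f3 : AvAux.g3 n 2 = 1 := by unfold AvAux.g3; rw [if_neg (by omega), if_neg (by omega)]
  have f4 : AvAux.g4 n 2 = n - 2 := by unfold AvAux.g4; rw [if_neg (by omega)]
  have hne12 : AvAux.w1 n ≠ AvAux.w2 n := by
    intro h
    have hv : AvAux.g1 n 1 = AvAux.g2 n 1 := congrArg Fin.val (congrFun h ⟨1, by omega⟩)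
    omega
  have hne13 : AvAux.w1 n ≠ AvAux.w3 n := by
    intro h
    have hv : AvAux.g1 n 1 = AvAux.g3 n 1 := congrArg Fin.val (congrFun h ⟨1, by omega⟩)
    omega
  have hne14 : AvAux.w1 n ≠ AvAux.w4 n := by
    intro h
    have hv : AvAux.g1 n 1 = AvAux.g4 n 1 := congrArg Fin.val (congrFun h ⟨1, by omega⟩)
    omega
  have hne23 : AvAux.w2 n ≠ AvAux.w3 n := by
    intro h
    have hv : AvAux.g2 n 1 = AvAux.g3 n 1 := congrArg Fin.val (congrFun h ⟨1, by omega⟩)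
    omega
  have hne24 : AvAux.w2 n ≠ AvAux.w4 n := by
    intro h
    have hv : AvAux.g2 n 1 = AvAux.g4 n 1 := congrArg Fin.val (congrFun h ⟨1, by omega⟩)
    omega
  have hne34 : AvAux.w3 n ≠ AvAux.w4 n := by
    intro h
    have hv : AvAux.g3 n 2 = AvAux.g4 n 2 := congrArg Fin.val (congrFun h ⟨2, by omega⟩)
    omega
  have hset : AvClasses n (fun σ => CycAvoids σ ![1,2,4,3] ∧ CycAvoids σ ![1,3,4,2]) =
      {CycClass (AvAux.w1 n), CycClass (AvAux.w2 n), CycClass (AvAux.w3 n),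
        CycClass (AvAux.w4 n)} := by
    ext C
    simp only [AvClasses, Set.mem_setOf_eq, Set.mem_insert_iff, Set.mem_singleton_iff]
    constructor
    · rintro ⟨σ, rfl, hav⟩
      have hinjσ : Function.Injective ⇑σ := σ.injective
      have hbadσ : ∀ r, ¬ AvAux.Bad (rotSeq ⇑σ r) := (AvAux.avoids_iff ⇑σ hinjσ).mp hav
      set ρ : Fin n := σ.symm 0 with hρ
      set τ : Fin n → Fin n := rotSeq ⇑σ ρ with hτ
      have hτ0 : τ 0 = 0 := by
        show σ (0 + ρ) = 0
        rw [zero_add, hρ]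
        exact σ.apply_symm_apply 0
      have hτinj : Function.Injective τ := fun a b hab => by
        have h2 := hinjσ hab
        exact add_right_cancel h2
      have hτbad : ∀ s, ¬ AvAux.Bad (rotSeq τ s) := by
        intro s
        rw [hτ, AvAux.rot_rot]
        exact hbadσ _
      have hclass : CycClass ⇑σ = CycClass τ := (AvAux.cycClass_rot ⇑σ ρ).symm
      rcases AvAux.classify hn τ hτinj hτ0 hτbad with h | h | h | h <;>
        rw [hclass, h] <;> tauto
    · intro hC
      have main : ∀ w : Fin n → Fin n, Function.Injective w →
          (∀ r, ¬ AvAux.Bad (rotSeq w r)) →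
          ∃ σ : Equiv.Perm (Fin n), CycClass w = CycClass ⇑σ ∧
            (CycAvoids (⇑σ) ![1,2,4,3] ∧ CycAvoids (⇑σ) ![1,3,4,2]) := by
        intro w hwinj hwbad
        refine ⟨Equiv.ofBijective w (Finite.injective_iff_bijective.mp hwinj), rfl, ?_⟩
        exact (AvAux.avoids_iff w hwinj).mpr hwbad
      rcases hC with h | h | h | h
      · obtain ⟨σ, h1, h2⟩ := main (AvAux.w1 n) hinj1 (AvAux.avoid1 hn)
        exact ⟨σ, by rw [h, h1], h2⟩
      · obtain ⟨σ, h1, h2⟩ := main (AvAux.w2 n) hinj2 (AvAux.avoid2 hn)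
        exact ⟨σ, by rw [h, h1], h2⟩
      · obtain ⟨σ, h1, h2⟩ := main (AvAux.w3 n) hinj3 (AvAux.avoid3 hn)
        exact ⟨σ, by rw [h, h1], h2⟩
      · obtain ⟨σ, h1, h2⟩ := main (AvAux.w4 n) hinj4 (AvAux.avoid4 hn)
        exact ⟨σ, by rw [h, h1], h2⟩
  have d12 : CycClass (AvAux.w1 n) ≠ CycClass (AvAux.w2 n) :=
    fun h => hne12 (AvAux.class_eq_fun _ _ hinj1 hz1 hz2 h)
  have d13 : CycClass (AvAux.w1 n) ≠ CycClass (AvAux.w3 n) :=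
    fun h => hne13 (AvAux.class_eq_fun _ _ hinj1 hz1 hz3 h)
  have d14 : CycClass (AvAux.w1 n) ≠ CycClass (AvAux.w4 n) :=
    fun h => hne14 (AvAux.class_eq_fun _ _ hinj1 hz1 hz4 h)
  have d23 : CycClass (AvAux.w2 n) ≠ CycClass (AvAux.w3 n) :=
    fun h => hne23 (AvAux.class_eq_fun _ _ hinj2 hz2 hz3 h)
  have d24 : CycClass (AvAux.w2 n) ≠ CycClass (AvAux.w4 n) :=
    fun h => hne24 (AvAux.class_eq_fun _ _ hinj2 hz2 hz4 h)
  have d34 : CycClass (AvAux.w3 n) ≠ CycClass (AvAux.w4 n) :=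
    fun h => hne34 (AvAux.class_eq_fun _ _ hinj3 hz3 hz4 h)
  rw [hset]
  rw [Set.ncard_insert_of_notMem (by simp [d12, d13, d14])
        (((Set.finite_singleton _).insert _).insert _),
      Set.ncard_insert_of_notMem (by simp [d23, d24]) ((Set.finite_singleton _).insert _),
      Set.ncard_insert_of_notMem (by simp [d34]) (Set.finite_singleton _),
      Set.ncard_singleton]
end

section
/- For every integer n ≥ 3, the number of cyclic permutations of length n avoiding both cyclic patterns [1324] and [1423] equals 2^{n−2}; that is, #Av_n([1324],[1423]) = 2^{n−2}. -/
namespace CycAux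

/-- A "bad triple" for a canonical word. -/
def Bad (n : ℕ) (σ : Fin n → Fin n) : Prop :=
  ∃ a b c : Fin n, a < b ∧ b < c ∧ (c : ℕ) < n - 1 ∧ σ a < σ b ∧ σ c < σ b

variable {n : ℕ}

theorem rot_rot (σ : Fin n → Fin n) (r s : Fin n) :
    rotSeq (rotSeq σ r) s = rotSeq σ (s + r) := by
  funext i; simp [rotSeq, add_assoc]

theorem rot_zero [NeZero n] (σ : Fin n → Fin n) : rotSeq σ 0 = σ := by
  funext i; simp [rotSeq]

theorem self_mem_cycClass [NeZero n] (σ : Fin n → Fin n) : σ ∈ CycClass σ :=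
  ⟨0, rot_zero σ⟩

theorem cycClass_rot [NeZero n] (σ : Fin n → Fin n) (r : Fin n) :
    CycClass (rotSeq σ r) = CycClass σ := by
  ext τ
  constructor
  · rintro ⟨s, rfl⟩; exact ⟨s + r, (rot_rot σ r s).symm⟩
  · rintro ⟨s, rfl⟩
    exact ⟨s - r, by rw [rot_rot, sub_add_cancel]⟩

theorem cycContains_rot [NeZero n] {k : ℕ} (σ : Fin n → Fin n) (r : Fin n) (π : Fin k → ℕ) :
    CycContains (rotSeq σ r) π ↔ CycContains σ π := by
  constructor
  · rintro ⟨s, h⟩; exact ⟨s + r, by rwa [rot_rot] at h⟩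
  · rintro ⟨s, h⟩; exact ⟨s - r, by rwa [rot_rot, sub_add_cancel]⟩

theorem rot_bijective [NeZero n] {σ : Fin n → Fin n} (h : Function.Bijective σ) (r : Fin n) :
    Function.Bijective (rotSeq σ r) :=
  h.comp (Equiv.addRight r).bijective

theorem canonical_unique [NeZero n] {σ τ : Fin n → Fin n} (hσ : Function.Injective σ)
    (hτ : τ ∈ CycClass σ) (L : Fin n) (h1 : σ L = L) (h2 : τ L = L) : τ = σ := by
  obtain ⟨r, rfl⟩ := hτ
  have h3 : σ (L + r) = σ (L + 0) := by
    rw [add_zero, h1]; exact h2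
  have h4 : r = 0 := by
    have := hσ h3
    exact add_left_cancel this
  rw [h4, rot_zero]

end CycAux
namespace CycAux
variable {n : ℕ}
variable {n : ℕ}

theorem fin_lt {a b : Fin n} (h : (a:ℕ) < (b:ℕ)) : a < b := Fin.lt_def.mpr h

set_option maxHeartbeats 800000 in
theorem sm4 {a b c d : Fin n} (h1 : a < b) (h2 : b < c) (h3 : c < d) :
    StrictMono ![a,b,c,d] := by
  have h12 : a < c := h1.trans h2
  have h13 : a < d := h12.trans h3
  have h23 : b < d := h2.trans h3
  intro i j hij
  fin_cases i <;> fin_cases j <;>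
    first
      | exact absurd hij (by decide)
      | exact h1 | exact h2 | exact h3 | exact h12 | exact h13 | exact h23

set_option maxHeartbeats 800000 in
theorem pat1324 {σ : Fin n → Fin n} {a b c d : Fin n}
    (t01 : σ a < σ b) (t02 : σ a < σ c) (t03 : σ a < σ d)
    (t21 : σ c < σ b) (t23 : σ c < σ d) (t13 : σ b < σ d) :
    ∀ i j : Fin 4, (![1,3,2,4] : Fin 4 → ℕ) i < ![1,3,2,4] j ↔
      σ (![a,b,c,d] i) < σ (![a,b,c,d] j) := by
  intro i j
  fin_cases i <;> fin_cases j <;>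
    first
      | exact iff_of_false (by decide) (lt_irrefl _)
      | exact iff_of_true (by decide) t01
      | exact iff_of_true (by decide) t02
      | exact iff_of_true (by decide) t03
      | exact iff_of_true (by decide) t21
      | exact iff_of_true (by decide) t23
      | exact iff_of_true (by decide) t13
      | exact iff_of_false (by decide) (asymm t01)
      | exact iff_of_false (by decide) (asymm t02)
      | exact iff_of_false (by decide) (asymm t03)
      | exact iff_of_false (by decide) (asymm t21)
      | exact iff_of_false (by decide) (asymm t23)
      | exact iff_of_false (by decide) (asymm t13)

set_option maxHeartbeats 800000 in
theorem pat1423 {σ : Fin n → Fin n} {a b c d : Fin n}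
    (t01 : σ a < σ b) (t02 : σ a < σ c) (t03 : σ a < σ d)
    (t21 : σ c < σ b) (t23 : σ c < σ d) (t31 : σ d < σ b) :
    ∀ i j : Fin 4, (![1,4,2,3] : Fin 4 → ℕ) i < ![1,4,2,3] j ↔
      σ (![a,b,c,d] i) < σ (![a,b,c,d] j) := by
  intro i j
  fin_cases i <;> fin_cases j <;>
    first
      | exact iff_of_false (by decide) (lt_irrefl _)
      | exact iff_of_true (by decide) t01
      | exact iff_of_true (by decide) t02
      | exact iff_of_true (by decide) t03
      | exact iff_of_true (by decide) t21
      | exact iff_of_true (by decide) t23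
      | exact iff_of_true (by decide) t31
      | exact iff_of_false (by decide) (asymm t01)
      | exact iff_of_false (by decide) (asymm t02)
      | exact iff_of_false (by decide) (asymm t03)
      | exact iff_of_false (by decide) (asymm t21)
      | exact iff_of_false (by decide) (asymm t23)
      | exact iff_of_false (by decide) (asymm t31)


theorem val_add (a b : Fin n) : ((a + b : Fin n) : ℕ) = ((a:ℕ) + (b:ℕ)) % n := by
  rw [Fin.add_def]

theorem val_lt_pred {σ : Fin n → Fin n} (hn : 3 ≤ n) (hinj : Function.Injective σ)
    (hL : σ ⟨n-1, by omega⟩ = ⟨n-1, by omega⟩) {i : Fin n} (hi : (i : ℕ) ≠ n - 1) :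
    (σ i : ℕ) < n - 1 := by
  have h1 : σ i ≠ ⟨n-1, by omega⟩ := by
    intro h
    exact hi (congrArg Fin.val (hinj (h.trans hL.symm)))
  have h2 : (σ i : ℕ) ≠ n - 1 := fun h => h1 (Fin.ext h)
  have := (σ i).isLt
  omega

theorem contains_of_bad (hn : 3 ≤ n) {σ : Fin n → Fin n} (hinj : Function.Injective σ)
    (hL : σ ⟨n-1, by omega⟩ = ⟨n-1, by omega⟩) (hbad : Bad n σ) :
    CycContains σ ![1,3,2,4] ∨ CycContains σ ![1,4,2,3] := by
  haveI : NeZero n := ⟨by omega⟩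
  obtain ⟨a, b, c, hab, hbc, hc, h1, h2⟩ := hbad
  rw [Fin.lt_def] at hab hbc
  rw [Fin.lt_def] at h1 h2
  have hbv : (σ b : ℕ) < n - 1 := val_lt_pred hn hinj hL (by omega)
  have hav : (σ a : ℕ) < n - 1 := val_lt_pred hn hinj hL (by omega)
  have hcv : (σ c : ℕ) < n - 1 := val_lt_pred hn hinj hL (by omega)
  have hLv : (σ ⟨n-1, by omega⟩ : ℕ) = n - 1 := by rw [hL]
  have hcn : (c : ℕ) < n := c.isLt
  rcases lt_trichotomy ((σ a : ℕ)) ((σ c : ℕ)) with hac | hac | hac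
  · -- 1324 at positions a < b < c < n-1 (no rotation); values σa < σc < σb < n-1
    left
    refine ⟨0, ![a, b, c, ⟨n-1, by omega⟩],
      sm4 (fin_lt hab) (fin_lt hbc) (fin_lt (by simp only; omega)), ?_⟩
    rw [rot_zero]
    exact pat1324 (fin_lt (by omega)) (fin_lt (by omega)) (fin_lt (by omega))
      (fin_lt (by omega)) (fin_lt (by omega)) (fin_lt (by omega))
  · exact absurd (hinj (Fin.ext hac)) (fun h => by rw [Fin.ext_iff] at h; omega)
  · -- 1423 at cyclic positions c, n-1, a, b (rotate by c); values σc < σa < σb < n-1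
    right
    obtain ⟨F0, hF0⟩ : ∃ x : Fin n, (x:ℕ) = 0 := ⟨⟨0, by omega⟩, rfl⟩
    obtain ⟨F1, hF1⟩ : ∃ x : Fin n, (x:ℕ) = n - 1 - c := ⟨⟨n-1-(c:ℕ), by omega⟩, rfl⟩
    obtain ⟨F2, hF2⟩ : ∃ x : Fin n, (x:ℕ) = (a:ℕ) + (n - c) := ⟨⟨(a:ℕ)+(n-(c:ℕ)), by omega⟩, rfl⟩
    obtain ⟨F3, hF3⟩ : ∃ x : Fin n, (x:ℕ) = (b:ℕ) + (n - c) := ⟨⟨(b:ℕ)+(n-(c:ℕ)), by omega⟩, rfl⟩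
    have e0 : F0 + c = c := by
      apply Fin.ext; rw [val_add, hF0, Nat.zero_add]; exact Nat.mod_eq_of_lt hcn
    have e1 : F1 + c = ⟨n-1, by omega⟩ := by
      apply Fin.ext; rw [val_add, hF1, show n - 1 - (c:ℕ) + c = n - 1 by omega]
      exact Nat.mod_eq_of_lt (by omega)
    have e2 : F2 + c = a := by
      apply Fin.ext; rw [val_add, hF2, show (a:ℕ) + (n - (c:ℕ)) + (c:ℕ) = (a:ℕ) + n by omega,
        Nat.add_mod_right]
      exact Nat.mod_eq_of_lt a.isLt
    have e3 : F3 + c = b := by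
      apply Fin.ext; rw [val_add, hF3, show (b:ℕ) + (n - (c:ℕ)) + (c:ℕ) = (b:ℕ) + n by omega,
        Nat.add_mod_right]
      exact Nat.mod_eq_of_lt b.isLt
    have t01 : rotSeq σ c F0 < rotSeq σ c F1 := by
      show σ (F0 + c) < σ (F1 + c); rw [e0, e1]; exact fin_lt (by omega)
    have t02 : rotSeq σ c F0 < rotSeq σ c F2 := by
      show σ (F0 + c) < σ (F2 + c); rw [e0, e2]; exact fin_lt (by omega)
    have t03 : rotSeq σ c F0 < rotSeq σ c F3 := by
      show σ (F0 + c) < σ (F3 + c); rw [e0, e3]; exact fin_lt (by omega)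
    have t21 : rotSeq σ c F2 < rotSeq σ c F1 := by
      show σ (F2 + c) < σ (F1 + c); rw [e2, e1]; exact fin_lt (by omega)
    have t23 : rotSeq σ c F2 < rotSeq σ c F3 := by
      show σ (F2 + c) < σ (F3 + c); rw [e2, e3]; exact fin_lt (by omega)
    have t31 : rotSeq σ c F3 < rotSeq σ c F1 := by
      show σ (F3 + c) < σ (F1 + c); rw [e3, e1]; exact fin_lt (by omega)
    exact ⟨c, ![F0, F1, F2, F3],
      sm4 (fin_lt (by omega)) (fin_lt (by omega)) (fin_lt (by omega)),
      pat1423 t01 t02 t03 t21 t23 t31⟩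

theorem bad_core (hn : 3 ≤ n) {σ : Fin n → Fin n} (hinj : Function.Injective σ)
    (hL : σ ⟨n-1, by omega⟩ = ⟨n-1, by omega⟩) {r : Fin n} {f : Fin 4 → Fin n}
    (hf : StrictMono f)
    (h02 : σ (f 0 + r) < σ (f 2 + r)) (h21 : σ (f 2 + r) < σ (f 1 + r))
    (h23 : σ (f 2 + r) < σ (f 3 + r)) : Bad n σ := by
  haveI : NeZero n := ⟨by omega⟩
  have hpv : ∀ i : Fin 4, ((f i + r : Fin n) : ℕ) = ((f i : ℕ) + (r:ℕ)) % n :=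
    fun i => val_add _ _
  have b0 : (f 0 : ℕ) < n := (f 0).isLt
  have b1 : (f 1 : ℕ) < n := (f 1).isLt
  have b2 : (f 2 : ℕ) < n := (f 2).isLt
  have b3 : (f 3 : ℕ) < n := (f 3).isLt
  have hrv : (r:ℕ) < n := r.isLt
  have m01 : (f 0 : ℕ) < (f 1 : ℕ) := Fin.lt_def.mp (hf (by decide))
  have m12 : (f 1 : ℕ) < (f 2 : ℕ) := Fin.lt_def.mp (hf (by decide))
  have m23 : (f 2 : ℕ) < (f 3 : ℕ) := Fin.lt_def.mp (hf (by decide))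
  have key : ∀ i j : Fin 4, σ (f i + r) < σ (f j + r) → ((f i + r : Fin n) : ℕ) < n - 1 := by
    intro i j hlt
    have hne : ((f i + r : Fin n) : ℕ) ≠ n - 1 := by
      intro e
      have he : (f i + r : Fin n) = ⟨n-1, by omega⟩ := Fin.ext e
      rw [he, hL] at hlt
      have h5 := Fin.lt_def.mp hlt
      have h6 := (σ (f j + r)).isLt
      simp only at h5
      omega
    have := (f i + r : Fin n).isLt
    omega
  have d : ∀ i : Fin 4,
      (((f i + r : Fin n) : ℕ) = (f i : ℕ) + (r:ℕ) ∧ (f i : ℕ) + (r:ℕ) < n) ∨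
      (((f i + r : Fin n) : ℕ) = (f i : ℕ) + (r:ℕ) - n ∧ n ≤ (f i : ℕ) + (r:ℕ)) := by
    intro i
    rcases Nat.lt_or_ge ((f i : ℕ) + (r:ℕ)) n with h | h
    · exact Or.inl ⟨by rw [hpv i, Nat.mod_eq_of_lt h], h⟩
    · refine Or.inr ⟨?_, h⟩
      rw [hpv i, Nat.mod_eq_sub_mod h, Nat.mod_eq_of_lt (by have := (f i).isLt; omega)]
  rcases d 0 with ⟨e0, s0⟩ | ⟨e0, s0⟩ <;> rcases d 1 with ⟨e1, s1⟩ | ⟨e1, s1⟩ <;>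
    rcases d 2 with ⟨e2, s2⟩ | ⟨e2, s2⟩ <;> rcases d 3 with ⟨e3, s3⟩ | ⟨e3, s3⟩ <;>
    first
      | (exfalso; omega)
      | exact ⟨f 0 + r, f 1 + r, f 2 + r, fin_lt (by omega), fin_lt (by omega),
          by omega, h02.trans h21, h21⟩
      | exact ⟨f 0 + r, f 1 + r, f 2 + r, fin_lt (by omega), fin_lt (by omega),
          key 2 1 h21, h02.trans h21, h21⟩
      | exact ⟨f 2 + r, f 3 + r, f 0 + r, fin_lt (by omega), fin_lt (by omega),
          by omega, h23, h02.trans h23⟩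
      | exact ⟨f 2 + r, f 3 + r, f 0 + r, fin_lt (by omega), fin_lt (by omega),
          key 0 2 h02, h23, h02.trans h23⟩

theorem bad_of_contains (hn : 3 ≤ n) {σ : Fin n → Fin n} (hinj : Function.Injective σ)
    (hL : σ ⟨n-1, by omega⟩ = ⟨n-1, by omega⟩)
    (h : CycContains σ ![1,3,2,4] ∨ CycContains σ ![1,4,2,3]) : Bad n σ := by
  rcases h with ⟨r, f, hf, hiff⟩ | ⟨r, f, hf, hiff⟩
  · exact bad_core hn hinj hL hf ((hiff 0 2).mp (by decide)) ((hiff 2 1).mp (by decide))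
      ((hiff 2 3).mp (by decide))
  · exact bad_core hn hinj hL hf ((hiff 0 2).mp (by decide)) ((hiff 2 1).mp (by decide))
      ((hiff 2 3).mp (by decide))

end CycAux
namespace CycAux

variable {n : ℕ}

/-- The valley permutation determined by the set `S` of values placed (in
decreasing order) before the minimum. -/
def sigOf (S : Finset (Fin n)) (i : Fin n) : Fin n :=
  if h : (i : ℕ) < S.card then
    S.orderEmbOfFin rfl ⟨S.card - 1 - i, by omega⟩
  else
    Sᶜ.orderEmbOfFin (show Sᶜ.card = n - S.card by simp [Finset.card_compl])
      ⟨(i : ℕ) - S.card, by have := i.isLt; omega⟩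

theorem sigOf_pos {S : Finset (Fin n)} {i : Fin n} (h : (i : ℕ) < S.card) :
    sigOf S i = S.orderEmbOfFin rfl ⟨S.card - 1 - i, by omega⟩ := dif_pos h

theorem sigOf_neg {S : Finset (Fin n)} {i : Fin n} (h : ¬ (i : ℕ) < S.card) :
    sigOf S i = Sᶜ.orderEmbOfFin (show Sᶜ.card = n - S.card by simp [Finset.card_compl])
      ⟨(i : ℕ) - S.card, by have := i.isLt; omega⟩ := dif_neg h

theorem sigOf_lt_mem {S : Finset (Fin n)} {i : Fin n} (h : (i : ℕ) < S.card) :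
    sigOf S i ∈ S := by
  rw [sigOf_pos h]
  exact Finset.orderEmbOfFin_mem _ _ _

theorem sigOf_ge_mem {S : Finset (Fin n)} {i : Fin n} (h : ¬ (i : ℕ) < S.card) :
    sigOf S i ∈ Sᶜ := by
  rw [sigOf_neg h]
  exact Finset.orderEmbOfFin_mem _ _ _

theorem sigOf_dec {S : Finset (Fin n)} {i j : Fin n} (hij : i < j) (hj : (j : ℕ) < S.card) :
    sigOf S j < sigOf S i := by
  have hi : (i : ℕ) < S.card := lt_trans (Fin.lt_def.mp hij) hj
  rw [sigOf_pos hi, sigOf_pos hj]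
  apply (S.orderEmbOfFin rfl).strictMono
  rw [Fin.mk_lt_mk]
  have := Fin.lt_def.mp hij
  omega

theorem sigOf_inc {S : Finset (Fin n)} {i j : Fin n} (hi : ¬ (i : ℕ) < S.card) (hij : i < j) :
    sigOf S i < sigOf S j := by
  have hj : ¬ (j : ℕ) < S.card := fun h => hi (lt_trans (Fin.lt_def.mp hij) h)
  rw [sigOf_neg hi, sigOf_neg hj]
  apply (Sᶜ.orderEmbOfFin _).strictMono
  rw [Fin.mk_lt_mk]
  have := Fin.lt_def.mp hij
  omega

theorem sigOf_not_bad (S : Finset (Fin n)) : ¬ Bad n (sigOf S) := by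
  rintro ⟨a, b, c, hab, hbc, hc, h1, h2⟩
  by_cases hb : (b : ℕ) < S.card
  · exact absurd h1 (asymm (sigOf_dec hab hb))
  · exact absurd h2 (asymm (sigOf_inc hb hbc))

theorem sigOf_injective (S : Finset (Fin n)) : Function.Injective (sigOf S) := by
  intro i j h
  by_cases hi : (i : ℕ) < S.card <;> by_cases hj : (j : ℕ) < S.card
  · rw [sigOf_pos hi, sigOf_pos hj] at h
    have := Finset.orderEmbOfFin_eq_orderEmbOfFin_iff.mp h
    simp only at this
    apply Fin.ext
    omega
  · exfalso
    have hm := sigOf_ge_mem hj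
    rw [← h] at hm
    exact (Finset.mem_compl.mp hm) (sigOf_lt_mem hi)
  · exfalso
    have hm := sigOf_ge_mem hi
    rw [h] at hm
    exact (Finset.mem_compl.mp hm) (sigOf_lt_mem hj)
  · rw [sigOf_neg hi, sigOf_neg hj] at h
    have := Finset.orderEmbOfFin_eq_orderEmbOfFin_iff.mp h
    simp only at this
    apply Fin.ext
    have := i.isLt
    have := j.isLt
    omega

theorem sigOf_bijective (S : Finset (Fin n)) : Function.Bijective (sigOf S) :=
  Finite.injective_iff_bijective.mp (sigOf_injective S)

theorem sigOf_card_lt {S : Finset (Fin n)} {v : Fin n} (hv : v ∉ S) : S.card < n := by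
  have h1 : S.card ≤ n := by
    have := Finset.card_le_card (Finset.subset_univ S)
    simpa using this
  rcases lt_or_eq_of_le h1 with h | h
  · exact h
  · exfalso
    have : S = Finset.univ := Finset.eq_univ_of_card S (by simp [h])
    exact hv (this ▸ Finset.mem_univ v)

theorem sigOf_last (hn : 3 ≤ n) {S : Finset (Fin n)} (hL : (⟨n-1, by omega⟩ : Fin n) ∉ S) :
    sigOf S ⟨n-1, by omega⟩ = ⟨n-1, by omega⟩ := by
  have hcard : S.card < n := sigOf_card_lt hL
  have hcard' : S.card ≤ n - 1 := by omega
  rw [sigOf_neg (by show ¬ (n-1) < S.card; omega)]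
  have hc : Sᶜ.card = n - S.card := by simp [Finset.card_compl]
  have hpos : 0 < n - S.card := by omega
  have hidx : (⟨((⟨n-1, by omega⟩ : Fin n) : ℕ) - S.card, by
        have h9 := (⟨n-1, by omega⟩ : Fin n).isLt; omega⟩ :
      Fin (n - S.card)) = ⟨n - S.card - 1, by omega⟩ := by
    apply Fin.ext
    show (n-1) - S.card = n - S.card - 1
    omega
  rw [hidx, Finset.orderEmbOfFin_last hc hpos]
  apply le_antisymm
  · have hne : Sᶜ.Nonempty := Finset.card_pos.mp (by omega)
    have h9 := (Sᶜ.max' hne).isLt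
    exact Fin.le_def.mpr (show ((Sᶜ.max' hne) : ℕ) ≤ n - 1 by omega)
  · exact Finset.le_max' _ _ (Finset.mem_compl.mpr hL)

theorem sigOf_min [NeZero n] {S : Finset (Fin n)} (h0 : (0 : Fin n) ∉ S) (hcard : S.card < n) :
    sigOf S ⟨S.card, hcard⟩ = 0 := by
  rw [sigOf_neg (show ¬ ((⟨S.card, hcard⟩ : Fin n) : ℕ) < S.card by
    show ¬ S.card < S.card; omega)]
  have hc : Sᶜ.card = n - S.card := by simp [Finset.card_compl]
  have hpos : 0 < n - S.card := by omega
  have hidx : (⟨((⟨S.card, hcard⟩ : Fin n) : ℕ) - S.card, by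
        have h9 := (⟨S.card, hcard⟩ : Fin n).isLt; omega⟩ :
      Fin (n - S.card)) = ⟨0, hpos⟩ := by
    apply Fin.ext
    show S.card - S.card = 0
    omega
  rw [hidx, Finset.orderEmbOfFin_zero hc hpos]
  apply le_antisymm
  · exact Finset.min'_le _ _ (Finset.mem_compl.mpr h0)
  · exact Fin.zero_le _

theorem sigOf_mem_iff (S : Finset (Fin n)) (v : Fin n) :
    v ∈ S ↔ ∃ i : Fin n, (i : ℕ) < S.card ∧ sigOf S i = v := by
  constructor
  · intro hv
    have hcle : S.card ≤ n := by
      have := Finset.card_le_card (Finset.subset_univ S)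
      simpa using this
    have : v ∈ Set.range (S.orderEmbOfFin rfl) := by
      rw [Finset.range_orderEmbOfFin]
      exact hv
    obtain ⟨x, hx⟩ := this
    have hxlt : (x : ℕ) < S.card := x.isLt
    refine ⟨⟨S.card - 1 - x, by omega⟩, by show S.card - 1 - (x:ℕ) < S.card; omega, ?_⟩
    rw [sigOf_pos (show ((⟨S.card - 1 - (x:ℕ), by omega⟩ : Fin n) : ℕ) < S.card by
      show S.card - 1 - (x:ℕ) < S.card; omega)]
    rw [show (⟨S.card - 1 - ((⟨S.card - 1 - (x:ℕ), by omega⟩ : Fin n) : ℕ), by omega⟩ :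
      Fin S.card) = x by apply Fin.ext; show S.card - 1 - (S.card - 1 - (x:ℕ)) = (x:ℕ); omega]
    exact hx
  · rintro ⟨i, hi, rfl⟩
    exact sigOf_lt_mem hi

theorem sigOf_card_le [NeZero n] {S T : Finset (Fin n)} (h0S : (0 : Fin n) ∉ S) (h0T : (0 : Fin n) ∉ T)
    (h : sigOf S = sigOf T) : S.card ≤ T.card := by
  by_contra hlt
  push_neg at hlt
  have hTn : T.card < n := sigOf_card_lt h0T
  have h1 : sigOf T ⟨T.card, hTn⟩ = 0 := sigOf_min h0T hTn
  have h2 : sigOf S ⟨T.card, hTn⟩ ∈ S := sigOf_lt_mem (by show T.card < S.card; omega)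
  rw [h, h1] at h2
  exact h0S h2

theorem sigOf_inj [NeZero n] {S T : Finset (Fin n)} (h0S : (0 : Fin n) ∉ S) (h0T : (0 : Fin n) ∉ T)
    (h : sigOf S = sigOf T) : S = T := by
  have hcard : S.card = T.card :=
    le_antisymm (sigOf_card_le h0S h0T h) (sigOf_card_le h0T h0S h.symm)
  ext v
  rw [sigOf_mem_iff, sigOf_mem_iff, h, hcard]

end CycAux
namespace CycAux

variable {n : ℕ}

theorem fin_pos [NeZero n] {x : Fin n} (h : x ≠ 0) : (0 : Fin n) < x := by
  apply Fin.lt_def.mpr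
  rw [Fin.val_zero]
  have h1 : (x : ℕ) ≠ 0 := fun e => h (Fin.ext (by rw [e, Fin.val_zero]))
  omega

theorem eq_sigOf (hn : 3 ≤ n) {σ : Fin n → Fin n} (hbij : Function.Bijective σ)
    (hL : σ ⟨n-1, by omega⟩ = ⟨n-1, by omega⟩) (hnb : ¬ Bad n σ) :
    ∃ S : Finset (Fin n), (⟨0, by omega⟩ : Fin n) ∉ S ∧ (⟨n-1, by omega⟩ : Fin n) ∉ S ∧
      σ = sigOf S := by
  haveI : NeZero n := ⟨by omega⟩
  obtain ⟨K, hK⟩ := hbij.surjective 0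
  have hKlt : (K : ℕ) < n - 1 := by
    have h1 : (K : ℕ) ≠ n - 1 := by
      intro h
      have : K = (⟨n-1, by omega⟩ : Fin n) := Fin.ext h
      rw [this, hL] at hK
      have := congrArg Fin.val hK
      simp only [Fin.val_zero] at this
      omega
    have := K.isLt
    omega
  -- decreasing before K, increasing after K
  have hdec : ∀ a b : Fin n, a < b → (b : ℕ) ≤ (K : ℕ) → σ b < σ a := by
    intro a b hab hbK
    rcases lt_trichotomy (σ a) (σ b) with h | h | h
    · exfalso
      rcases eq_or_lt_of_le hbK with hbK' | hbK'
      · have : b = K := Fin.ext hbK'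
        rw [this, hK] at h
        exact absurd (Fin.lt_def.mp h) (by simp)
      · refine hnb ⟨a, b, K, hab, Fin.lt_def.mpr hbK', by omega, h, ?_⟩
        rw [hK]
        have : σ b ≠ 0 := by
          intro e
          have : b = K := hbij.injective (e.trans hK.symm)
          rw [this] at hbK'
          exact lt_irrefl _ hbK'
        exact fin_pos this
    · exact absurd (hbij.injective h) (ne_of_lt hab)
    · exact h
  have hinc : ∀ b c : Fin n, (K : ℕ) ≤ (b : ℕ) → b < c → σ b < σ c := by
    intro b c hKb hbc
    rcases lt_trichotomy (σ b) (σ c) with h | h | h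
    · exact h
    · exact absurd (hbij.injective h) (ne_of_lt hbc)
    · exfalso
      rcases eq_or_lt_of_le hKb with hKb' | hKb'
      · have : K = b := Fin.ext hKb'
        rw [← this, hK] at h
        exact absurd (Fin.lt_def.mp h) (by simp)
      · have hcl : (c : ℕ) < n - 1 := by
          have h1 : (c : ℕ) ≠ n - 1 := by
            intro e
            have : c = (⟨n-1, by omega⟩ : Fin n) := Fin.ext e
            rw [this, hL] at h
            have h5 := Fin.lt_def.mp h
            have h6 := (σ b).isLt
            simp only at h5
            omega
          have := c.isLt
          omega
        refine hnb ⟨K, b, c, Fin.lt_def.mpr hKb', hbc, hcl, ?_, h⟩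
        rw [hK]
        have : σ b ≠ 0 := by
          intro e
          have : b = K := hbij.injective (e.trans hK.symm)
          rw [this] at hKb'
          exact lt_irrefl _ hKb'
        exact fin_pos this
  have h00 : (⟨0, by omega⟩ : Fin n) = 0 := by
    apply Fin.ext
    simp
  refine ⟨(Finset.Iio K).image σ, ?_, ?_, ?_⟩
  · intro h0
    obtain ⟨x, hx, hx0⟩ := Finset.mem_image.mp h0
    rw [h00] at hx0
    have : x = K := hbij.injective (hx0.trans hK.symm)
    rw [this] at hx
    exact absurd (Finset.mem_Iio.mp hx) (lt_irrefl K)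
  · intro hLm
    obtain ⟨x, hx, hxL⟩ := Finset.mem_image.mp hLm
    have hxK : x = ⟨n-1, by omega⟩ := hbij.injective (hxL.trans hL.symm)
    have h7 := Fin.lt_def.mp (Finset.mem_Iio.mp hx)
    have h8 : (x : ℕ) = n - 1 := by rw [hxK]
    omega
  · -- σ = sigOf S
    set S : Finset (Fin n) := (Finset.Iio K).image σ with hS
    have hcS : S.card = (K : ℕ) := by
      rw [hS, Finset.card_image_of_injective _ hbij.injective, Fin.card_Iio]
    funext i
    by_cases hi : (i : ℕ) < S.card
    · rw [sigOf_pos hi]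
      have hg : ∀ j : Fin S.card, (fun j : Fin S.card =>
          σ ⟨S.card - 1 - (j : ℕ), by have := K.isLt; omega⟩) j = S.orderEmbOfFin rfl j := by
        rw [← funext_iff]
        apply Finset.orderEmbOfFin_unique
        · intro x
          apply Finset.mem_image.mpr
          refine ⟨⟨S.card - 1 - (x : ℕ), by have := K.isLt; omega⟩, ?_, rfl⟩
          apply Finset.mem_Iio.mpr
          apply Fin.lt_def.mpr
          show S.card - 1 - (x : ℕ) < (K : ℕ)
          have := x.isLt
          omega
        · intro x y hxy
          have hx := x.isLt
          have hy := y.isLt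
          apply hdec
          · apply Fin.lt_def.mpr
            show S.card - 1 - (y : ℕ) < S.card - 1 - (x : ℕ)
            have := Fin.lt_def.mp hxy
            omega
          · show S.card - 1 - (x : ℕ) ≤ (K : ℕ)
            omega
      rw [← hg ⟨S.card - 1 - (i : ℕ), by omega⟩]
      apply congrArg
      apply Fin.ext
      show (i : ℕ) = S.card - 1 - (S.card - 1 - (i : ℕ))
      omega
    · rw [sigOf_neg hi]
      have hcc : Sᶜ.card = n - S.card := by simp [Finset.card_compl]
      have hg : ∀ j : Fin (n - S.card), (fun j : Fin (n - S.card) =>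
          σ ⟨S.card + (j : ℕ), by have := j.isLt; have := K.isLt; omega⟩) j =
          Sᶜ.orderEmbOfFin hcc j := by
        rw [← funext_iff]
        apply Finset.orderEmbOfFin_unique
        · intro x
          apply Finset.mem_compl.mpr
          intro hmem
          obtain ⟨y, hy, hyx⟩ := Finset.mem_image.mp hmem
          have : y = ⟨S.card + (x : ℕ), by have := x.isLt; have := K.isLt; omega⟩ :=
            hbij.injective hyx
          have h7 := Fin.lt_def.mp (Finset.mem_Iio.mp hy)
          have h8 : (y : ℕ) = S.card + (x : ℕ) := by rw [this]
          omega
        · intro x y hxy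
          apply hinc
          · show (K : ℕ) ≤ S.card + (x : ℕ)
            omega
          · apply Fin.lt_def.mpr
            show S.card + (x : ℕ) < S.card + (y : ℕ)
            have := Fin.lt_def.mp hxy
            omega
      rw [show Sᶜ.orderEmbOfFin (show Sᶜ.card = n - S.card by simp [Finset.card_compl]) =
          Sᶜ.orderEmbOfFin hcc from rfl]
      rw [← hg ⟨(i : ℕ) - S.card, by have := i.isLt; omega⟩]
      apply congrArg
      apply Fin.ext
      show (i : ℕ) = S.card + ((i : ℕ) - S.card)
      omega

end CycAux

open CycAux in
theorem card_av_1324_1423 (n : ℕ) (hn : 3 ≤ n) :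
    (AvClasses n fun σ => CycAvoids σ ![1,3,2,4] ∧ CycAvoids σ ![1,4,2,3]).ncard = 2 ^ (n - 2) := by
  haveI : NeZero n := ⟨by omega⟩
  set L : Fin n := ⟨n-1, by omega⟩ with hLdef
  have h00 : (⟨0, by omega⟩ : Fin n) = 0 := by
    apply Fin.ext
    simp
  set B : Finset (Fin n) := (Finset.univ.erase 0).erase L with hBdef
  have hL0 : L ≠ 0 := by
    intro e
    have := congrArg Fin.val e
    simp only [Fin.val_zero] at this
    have h2 : (L : ℕ) = n - 1 := rfl
    omega
  have hBcard : B.card = n - 2 := by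
    rw [hBdef, Finset.card_erase_of_mem (Finset.mem_erase.mpr ⟨hL0, Finset.mem_univ _⟩),
      Finset.card_erase_of_mem (Finset.mem_univ _), Finset.card_univ, Fintype.card_fin]
    omega
  have hmain : (AvClasses n fun σ => CycAvoids σ ![1,3,2,4] ∧ CycAvoids σ ![1,4,2,3])
      = (fun S : Finset (Fin n) => CycClass (sigOf S)) '' ↑B.powerset := by
    ext C
    constructor
    · rintro ⟨σ, rfl, hav1, hav2⟩
      obtain ⟨r, hrdef⟩ : ∃ r : Fin n, r = σ.symm L - L := ⟨_, rfl⟩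
      have hτL : rotSeq (⇑σ) r L = L := by
        show σ (L + r) = L
        rw [hrdef, add_comm, sub_add_cancel]
        exact σ.apply_symm_apply L
      have hbijτ : Function.Bijective (rotSeq ⇑σ r) := rot_bijective σ.bijective r
      have hnb : ¬ Bad n (rotSeq ⇑σ r) := by
        intro hb
        rcases contains_of_bad hn hbijτ.injective hτL hb with h | h
        · exact hav1 ((cycContains_rot ⇑σ r _).mp h)
        · exact hav2 ((cycContains_rot ⇑σ r _).mp h)
      obtain ⟨S, h0S, hLS, hsig⟩ := eq_sigOf hn hbijτ hτL hnb
      have hLS' : L ∉ S := hLS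
      refine ⟨S, ?_, ?_⟩
      · apply Finset.mem_coe.mpr
        apply Finset.mem_powerset.mpr
        intro v hv
        refine Finset.mem_erase.mpr ⟨fun e => hLS' (e ▸ hv), Finset.mem_erase.mpr
          ⟨fun e => h0S (by rw [h00, ← e]; exact hv), Finset.mem_univ _⟩⟩
      · show CycClass (sigOf S) = CycClass ⇑σ
        rw [← hsig]
        exact cycClass_rot ⇑σ r
    · rintro ⟨S, hSm, rfl⟩
      have hsub : S ⊆ B := Finset.mem_powerset.mp (Finset.mem_coe.mp hSm)
      have h0S : (⟨0, by omega⟩ : Fin n) ∉ S := by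
        intro h
        have hh := Finset.mem_erase.mp (Finset.mem_erase.mp (hsub h)).2
        exact hh.1 h00
      have hLS : L ∉ S := fun h => (Finset.mem_erase.mp (hsub h)).1 rfl
      have hbij := sigOf_bijective S
      refine ⟨Equiv.ofBijective _ hbij, rfl, ?_, ?_⟩
      · intro h
        exact sigOf_not_bad S
          (bad_of_contains hn (sigOf_injective S) (sigOf_last hn hLS) (Or.inl h))
      · intro h
        exact sigOf_not_bad S
          (bad_of_contains hn (sigOf_injective S) (sigOf_last hn hLS) (Or.inr h))
  have hinjOn : Set.InjOn (fun S : Finset (Fin n) => CycClass (sigOf S)) ↑B.powerset := by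
    intro S hS T hT h
    have hsubS : S ⊆ B := Finset.mem_powerset.mp (Finset.mem_coe.mp hS)
    have hsubT : T ⊆ B := Finset.mem_powerset.mp (Finset.mem_coe.mp hT)
    have h0S : (0 : Fin n) ∉ S := by
      intro hmem
      exact (Finset.mem_erase.mp (Finset.mem_erase.mp (hsubS hmem)).2).1 rfl
    have h0T : (0 : Fin n) ∉ T := by
      intro hmem
      exact (Finset.mem_erase.mp (Finset.mem_erase.mp (hsubT hmem)).2).1 rfl
    have hLS : L ∉ S := fun hmem => (Finset.mem_erase.mp (hsubS hmem)).1 rfl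
    have hLT : L ∉ T := fun hmem => (Finset.mem_erase.mp (hsubT hmem)).1 rfl
    have hmem : sigOf T ∈ CycClass (sigOf S) := by
      show sigOf T ∈ (fun S : Finset (Fin n) => CycClass (sigOf S)) S
      rw [h]
      exact self_mem_cycClass _
    have heq := canonical_unique (sigOf_injective S) hmem L (sigOf_last hn hLS)
      (sigOf_last hn hLT)
    exact sigOf_inj h0S h0T heq.symm
  rw [hmain, Set.ncard_image_of_injOn hinjOn, Set.ncard_coe_finset, Finset.card_powerset,
    hBcard]
end

section
/- For every integer n ≥ 4, the number of cyclic permutations of length n avoiding all three cyclic patterns [1234], [1324], and [1342] equals 3; that is, #Av_n([1234],[1324],[1342]) = 3. -/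
namespace AvProof

variable {n : ℕ}

lemma smono4 {α : Type*} [Preorder α] (a b c d : α) (hab : a < b) (hbc : b < c) (hcd : c < d) :
    StrictMono ![a,b,c,d] := by
  intro i j hij
  fin_cases i <;> fin_cases j <;> simp_all <;>
    first | exact hab.trans hbc | exact hbc.trans hcd | exact (hab.trans hbc).trans hcd

lemma contains_of_quad {σ : Fin n → Fin n} {π : Fin 4 → ℕ} {a b c d : Fin n}
    (hab : a < b) (hbc : b < c) (hcd : c < d)
    (H : ∀ i j : Fin 4, π i < π j ↔
      ![(σ a).val, (σ b).val, (σ c).val, (σ d).val] i <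
      ![(σ a).val, (σ b).val, (σ c).val, (σ d).val] j) :
    ContainsPat σ π := by
  refine ⟨![a,b,c,d], smono4 _ _ _ _ hab hbc hcd, fun i j => (H i j).trans ?_⟩
  rw [Fin.lt_def]
  fin_cases i <;> fin_cases j <;> rfl

lemma sub_val [NeZero n] (a b : Fin n) :
    (a - b).val = if b.val ≤ a.val then a.val - b.val else a.val + n - b.val := by
  have ha := a.isLt; have hb := b.isLt
  rw [Fin.sub_def]
  simp only
  split_ifs with h
  · have e : n - b.val + a.val = (a.val - b.val) + n := by omega
    rw [e, Nat.add_mod_right, Nat.mod_eq_of_lt (by omega)]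
  · rw [Nat.mod_eq_of_lt (by omega)]; omega

def Bad (σ : Fin n → Fin n) : Prop :=
  ∃ p q1 q2 q3 : Fin n, 0 < (q1 - p).val ∧ (q1 - p).val < (q2 - p).val ∧
    (q2 - p).val < (q3 - p).val ∧
    σ p < σ q1 ∧ σ p < σ q2 ∧ σ p < σ q3 ∧
    ((σ q1 < σ q3 ∧ σ q2 < σ q3) ∨ (σ q1 < σ q2 ∧ σ q3 < σ q1))

lemma bad_contains [NeZero n] {σ : Fin n → Fin n} (hσ : Function.Injective σ) (h : Bad σ) :
    CycContains σ ![1,2,3,4] ∨ CycContains σ ![1,3,2,4] ∨ CycContains σ ![1,3,4,2] := by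
  obtain ⟨p, q1, q2, q3, h1, h2, h3, hp1, hp2, hp3, hd⟩ := h
  have e1 : q1 - p + p = q1 := sub_add_cancel q1 p
  have e2 : q2 - p + p = q2 := sub_add_cancel q2 p
  have e3 : q3 - p + p = q3 := sub_add_cancel q3 p
  have hv0 : rotSeq σ p (0 : Fin n) = σ p := by show σ (0 + p) = σ p; rw [zero_add]
  have hv1 : rotSeq σ p (q1 - p) = σ q1 := by show σ (q1 - p + p) = σ q1; rw [e1]
  have hv2 : rotSeq σ p (q2 - p) = σ q2 := by show σ (q2 - p + p) = σ q2; rw [e2]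
  have hv3 : rotSeq σ p (q3 - p) = σ q3 := by show σ (q3 - p + p) = σ q3; rw [e3]
  have m1 : (0 : Fin n) < q1 - p := by rw [Fin.lt_def]; simpa using h1
  have m2 : q1 - p < q2 - p := by rw [Fin.lt_def]; exact h2
  have m3 : q2 - p < q3 - p := by rw [Fin.lt_def]; exact h3
  rw [Fin.lt_def] at hp1 hp2 hp3
  have hne12 : σ q1 ≠ σ q2 := by
    intro he; have := hσ he; subst this; omega
  rcases hd with ⟨hd1, hd2⟩ | ⟨hd1, hd2⟩
  · rw [Fin.lt_def] at hd1 hd2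
    rcases lt_or_gt_of_ne hne12 with h12 | h12 <;> simp only [gt_iff_lt, Fin.lt_def] at h12
    · refine Or.inl ⟨p, contains_of_quad m1 m2 m3 fun i j => ?_⟩
      rw [hv0, hv1, hv2, hv3]
      fin_cases i <;> fin_cases j <;> simp <;> omega
    · refine Or.inr (Or.inl ⟨p, contains_of_quad m1 m2 m3 fun i j => ?_⟩)
      rw [hv0, hv1, hv2, hv3]
      fin_cases i <;> fin_cases j <;> simp <;> omega
  · rw [Fin.lt_def] at hd1 hd2
    refine Or.inr (Or.inr ⟨p, contains_of_quad m1 m2 m3 fun i j => ?_⟩)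
    rw [hv0, hv1, hv2, hv3]
    fin_cases i <;> fin_cases j <;> simp <;> omega


variable {n : ℕ}


lemma contains_bad [NeZero n] {σ : Fin n → Fin n}
    (h : CycContains σ ![1,2,3,4] ∨ CycContains σ ![1,3,2,4] ∨ CycContains σ ![1,3,4,2]) :
    Bad σ := by
  have key : ∀ π : Fin 4 → ℕ, CycContains σ π →
      ∃ p q1 q2 q3 : Fin n, 0 < (q1-p).val ∧ (q1-p).val < (q2-p).val ∧
        (q2-p).val < (q3-p).val ∧
        (∀ i j : Fin 4, π i < π j ↔
          ![σ p, σ q1, σ q2, σ q3] i < ![σ p, σ q1, σ q2, σ q3] j) := by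
    rintro π ⟨r, f, hm, hiff⟩
    have h01 : f 0 < f 1 := hm (by decide)
    have h12 : f 1 < f 2 := hm (by decide)
    have h23 : f 2 < f 3 := hm (by decide)
    rw [Fin.lt_def] at h01 h12 h23
    have sub1 : ∀ k : Fin 4, ((f k + r) - (f 0 + r)).val = (f k).val - (f 0).val := by
      intro k
      rw [add_sub_add_right_eq_sub, sub_val]
      have hle : (f 0).val ≤ (f k).val := by
        have := hm.monotone (Fin.zero_le k)
        rwa [Fin.le_def] at this
      rw [if_pos hle]
    refine ⟨f 0 + r, f 1 + r, f 2 + r, f 3 + r, ?_, ?_, ?_, ?_⟩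
    · rw [sub1 1]; omega
    · rw [sub1 1, sub1 2]; omega
    · rw [sub1 2, sub1 3]; omega
    · intro i j
      refine (hiff i j).trans ?_
      have ev : ∀ m : Fin 4, rotSeq σ r (f m) = ![σ (f 0 + r), σ (f 1 + r), σ (f 2 + r), σ (f 3 + r)] m := by
        intro m; fin_cases m <;> rfl
      rw [ev i, ev j]
  rcases h with h | h | h <;> obtain ⟨p, q1, q2, q3, o1, o2, o3, hiff⟩ := key _ h <;>
    refine ⟨p, q1, q2, q3, o1, o2, o3, ?_, ?_, ?_, ?_⟩
  · exact (hiff 0 1).mp (by decide)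
  · exact (hiff 0 2).mp (by decide)
  · exact (hiff 0 3).mp (by decide)
  · exact Or.inl ⟨(hiff 1 3).mp (by decide), (hiff 2 3).mp (by decide)⟩
  · exact (hiff 0 1).mp (by decide)
  · exact (hiff 0 2).mp (by decide)
  · exact (hiff 0 3).mp (by decide)
  · exact Or.inl ⟨(hiff 1 3).mp (by decide), (hiff 2 3).mp (by decide)⟩
  · exact (hiff 0 1).mp (by decide)
  · exact (hiff 0 2).mp (by decide)
  · exact (hiff 0 3).mp (by decide)
  · exact Or.inr ⟨(hiff 1 2).mp (by decide), (hiff 3 1).mp (by decide)⟩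

lemma rotSeq_zero [NeZero n] (σ : Fin n → Fin n) : rotSeq σ 0 = σ :=
  funext fun i => by rw [rotSeq, add_zero]

lemma rotSeq_rotSeq [NeZero n] (σ : Fin n → Fin n) (r s : Fin n) :
    rotSeq (rotSeq σ r) s = rotSeq σ (s + r) :=
  funext fun i => by simp only [rotSeq, add_assoc]

lemma cycContains_rotSeq [NeZero n] {k : ℕ} (σ : Fin n → Fin n) (r : Fin n) (π : Fin k → ℕ) :
    CycContains (rotSeq σ r) π ↔ CycContains σ π := by
  constructor
  · rintro ⟨s, hs⟩; exact ⟨s + r, by rwa [rotSeq_rotSeq] at hs⟩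
  · rintro ⟨s, hs⟩; exact ⟨s - r, by rwa [rotSeq_rotSeq, sub_add_cancel]⟩

lemma cycClass_rotSeq [NeZero n] (σ : Fin n → Fin n) (r : Fin n) :
    CycClass (rotSeq σ r) = CycClass σ := by
  ext τ
  constructor
  · rintro ⟨s, rfl⟩; exact ⟨s + r, (rotSeq_rotSeq σ r s).symm⟩
  · rintro ⟨s, rfl⟩; exact ⟨s - r, by rw [rotSeq_rotSeq, sub_add_cancel]⟩

lemma eq_of_class_eq [NeZero n] {σ τ : Fin n → Fin n} (hσ : Function.Injective σ)
    (h0σ : σ 0 = 0) (h0τ : τ 0 = 0) (h : CycClass σ = CycClass τ) : σ = τ := by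
  have hmem : τ ∈ CycClass τ := ⟨0, rotSeq_zero τ⟩
  rw [← h] at hmem
  obtain ⟨r, hr⟩ := hmem
  have h2 : σ r = 0 := by
    have : rotSeq σ r 0 = 0 := by rw [hr, h0τ]
    rwa [rotSeq, zero_add] at this
  have : r = 0 := hσ (by rw [h2, h0σ])
  subst this
  rwa [rotSeq_zero] at hr

variable {n : ℕ}


def fA (n : ℕ) : Fin n → Fin n := fun i =>
  ⟨(if i.val ≤ 1 then i.val else n + 1 - i.val) % n, Nat.mod_lt _ i.pos⟩
def fB (n : ℕ) : Fin n → Fin n := fun i =>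
  ⟨(if i.val = 0 then 0 else if i.val = n - 1 then 2 else if i.val = n - 2 then 1
      else n - i.val) % n, Nat.mod_lt _ i.pos⟩
def fC (n : ℕ) : Fin n → Fin n := fun i =>
  ⟨(if i.val = 0 then 0 else n - i.val) % n, Nat.mod_lt _ i.pos⟩

lemma fA_val (hn : 4 ≤ n) (i : Fin n) :
    (fA n i).val = if i.val ≤ 1 then i.val else n + 1 - i.val := by
  have := i.isLt
  show _ % n = _
  exact Nat.mod_eq_of_lt (by split_ifs <;> omega)
lemma fB_val (hn : 4 ≤ n) (i : Fin n) :
    (fB n i).val = if i.val = 0 then 0 else if i.val = n - 1 then 2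
      else if i.val = n - 2 then 1 else n - i.val := by
  have := i.isLt
  show _ % n = _
  exact Nat.mod_eq_of_lt (by split_ifs <;> omega)
lemma fC_val (hn : 4 ≤ n) (i : Fin n) :
    (fC n i).val = if i.val = 0 then 0 else n - i.val := by
  have := i.isLt
  show _ % n = _
  exact Nat.mod_eq_of_lt (by split_ifs <;> omega)

lemma fA_cases (hn : 4 ≤ n) (i : Fin n) :
    (i.val ≤ 1 ∧ (fA n i).val = i.val) ∨
    (2 ≤ i.val ∧ i.val ≤ n - 1 ∧ (fA n i).val = n + 1 - i.val) := by
  have := i.isLt; rw [fA_val hn]; split_ifs <;> omega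
lemma fB_cases (hn : 4 ≤ n) (i : Fin n) :
    (i.val = 0 ∧ (fB n i).val = 0) ∨ (i.val = n - 1 ∧ (fB n i).val = 2) ∨
    (i.val = n - 2 ∧ (fB n i).val = 1) ∨
    (1 ≤ i.val ∧ i.val ≤ n - 3 ∧ (fB n i).val = n - i.val) := by
  have := i.isLt; rw [fB_val hn]; split_ifs <;> omega
lemma fC_cases (hn : 4 ≤ n) (i : Fin n) :
    (i.val = 0 ∧ (fC n i).val = 0) ∨
    (1 ≤ i.val ∧ i.val ≤ n - 1 ∧ (fC n i).val = n - i.val) := by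
  have := i.isLt; rw [fC_val hn]; split_ifs <;> omega

lemma sub_cases [NeZero n] (a b : Fin n) :
    (b.val ≤ a.val ∧ (a - b).val = a.val - b.val) ∨
    (a.val < b.val ∧ (a - b).val = a.val + n - b.val) := by
  rw [sub_val]; split_ifs <;> omega

lemma notBad_fA (hn : 4 ≤ n) : ¬ Bad (fA n) := by
  have : NeZero n := ⟨by omega⟩
  rintro ⟨p, q1, q2, q3, h1, h2, h3, hp1, hp2, hp3, hd⟩
  rw [Fin.lt_def] at hp1 hp2 hp3
  have s1 := sub_cases q1 p
  have s2 := sub_cases q2 p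
  have s3 := sub_cases q3 p
  have c0 := fA_cases hn p
  have c1 := fA_cases hn q1
  have c2 := fA_cases hn q2
  have c3 := fA_cases hn q3
  have i0 := p.isLt; have i1 := q1.isLt; have i2 := q2.isLt; have i3 := q3.isLt
  rcases hd with ⟨hd1, hd2⟩ | ⟨hd1, hd2⟩ <;> rw [Fin.lt_def] at hd1 hd2 <;> omega

lemma notBad_fB (hn : 4 ≤ n) : ¬ Bad (fB n) := by
  have : NeZero n := ⟨by omega⟩
  rintro ⟨p, q1, q2, q3, h1, h2, h3, hp1, hp2, hp3, hd⟩
  rw [Fin.lt_def] at hp1 hp2 hp3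
  have s1 := sub_cases q1 p
  have s2 := sub_cases q2 p
  have s3 := sub_cases q3 p
  have c0 := fB_cases hn p
  have c1 := fB_cases hn q1
  have c2 := fB_cases hn q2
  have c3 := fB_cases hn q3
  have i0 := p.isLt; have i1 := q1.isLt; have i2 := q2.isLt; have i3 := q3.isLt
  rcases hd with ⟨hd1, hd2⟩ | ⟨hd1, hd2⟩ <;> rw [Fin.lt_def] at hd1 hd2 <;> omega

lemma notBad_fC (hn : 4 ≤ n) : ¬ Bad (fC n) := by
  have : NeZero n := ⟨by omega⟩
  rintro ⟨p, q1, q2, q3, h1, h2, h3, hp1, hp2, hp3, hd⟩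
  rw [Fin.lt_def] at hp1 hp2 hp3
  have s1 := sub_cases q1 p
  have s2 := sub_cases q2 p
  have s3 := sub_cases q3 p
  have c0 := fC_cases hn p
  have c1 := fC_cases hn q1
  have c2 := fC_cases hn q2
  have c3 := fC_cases hn q3
  have i0 := p.isLt; have i1 := q1.isLt; have i2 := q2.isLt; have i3 := q3.isLt
  rcases hd with ⟨hd1, hd2⟩ | ⟨hd1, hd2⟩ <;> rw [Fin.lt_def] at hd1 hd2 <;> omega

lemma fA_inj (hn : 4 ≤ n) : Function.Injective (fA n) := by
  intro a b h
  have h' := congrArg Fin.val h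
  rw [fA_val hn, fA_val hn] at h'
  have := a.isLt; have := b.isLt
  rw [Fin.ext_iff]
  split_ifs at h' <;> omega
lemma fB_inj (hn : 4 ≤ n) : Function.Injective (fB n) := by
  intro a b h
  have h' := congrArg Fin.val h
  rw [fB_val hn, fB_val hn] at h'
  have := a.isLt; have := b.isLt
  rw [Fin.ext_iff]
  split_ifs at h' <;> omega
lemma fC_inj (hn : 4 ≤ n) : Function.Injective (fC n) := by
  intro a b h
  have h' := congrArg Fin.val h
  rw [fC_val hn, fC_val hn] at h'
  have := a.isLt; have := b.isLt
  rw [Fin.ext_iff]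
  split_ifs at h' <;> omega

lemma classify [NeZero n] (hn : 4 ≤ n) (σ : Equiv.Perm (Fin n)) (h0 : σ 0 = 0) (hb : ¬ Bad ⇑σ) :
    ⇑σ = fA n ∨ ⇑σ = fB n ∨ ⇑σ = fC n := by
  have v00 : (0 : Fin n).val = 0 := by simp
  have hval0 : (σ (0 : Fin n)).val = 0 := by rw [h0]; exact v00
  obtain ⟨one, hone1⟩ : ∃ x : Fin n, x.val = 1 := ⟨⟨1, by omega⟩, rfl⟩
  obtain ⟨k, hσk⟩ : ∃ x : Fin n, σ x = one := ⟨σ.symm one, Equiv.apply_symm_apply σ one⟩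
  have hσkval : (σ k).val = 1 := by rw [hσk, hone1]
  have hz : ∀ q : Fin n, (σ q).val = 0 ↔ q.val = 0 := by
    intro q
    constructor
    · intro h
      have e : σ q = 0 := by rw [Fin.ext_iff, h, v00]
      have e2 : q = 0 := σ.injective (by rw [e, h0])
      rw [e2, v00]
    · intro h
      have : q = 0 := by rw [Fin.ext_iff, h, v00]
      rw [this, h0]; exact v00
  have ho : ∀ q : Fin n, (σ q).val = 1 ↔ q = k := by
    intro q
    constructor
    · intro h
      exact σ.injective (by rw [hσk, Fin.ext_iff, h, hone1])
    · intro h; rw [h, hσkval]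
  have hz' : ∀ q : Fin n, q.val ≠ 0 → (σ q).val ≠ 0 := fun q hq h => hq ((hz q).mp h)
  have ho' : ∀ q : Fin n, q ≠ k → (σ q).val ≠ 1 := fun q hq h => hq ((ho q).mp h)
  have hk0 : k.val ≠ 0 := by
    intro h
    have := (hz k).mpr h
    omega
  -- L1 : an ascent (off position 0) forces the first value to be 1
  have L1 : ∀ i j : Fin n, 0 < i.val → i.val < j.val → (σ i).val < (σ j).val →
      (σ i).val = 1 := by
    intro i j hi hij hlt
    by_contra hne
    have hi0 : (σ i).val ≠ 0 := hz' i (by omega)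
    have hj0 : (σ j).val ≠ 0 := hz' j (by omega)
    have hki : k ≠ i := by intro h; rw [h] at hσkval; omega
    have hkj : k ≠ j := by intro h; rw [h] at hσkval; omega
    have hki' : k.val ≠ i.val := fun h => hki (Fin.ext h)
    have hkj' : k.val ≠ j.val := fun h => hkj (Fin.ext h)
    apply hb
    rcases lt_trichotomy k.val i.val with hc | hc | hc
    · exact ⟨0, k, i, j, by rw [sub_zero]; omega, by rw [sub_zero, sub_zero]; omega,
        by rw [sub_zero, sub_zero]; omega,
        by rw [Fin.lt_def]; omega, by rw [Fin.lt_def]; omega, by rw [Fin.lt_def]; omega,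
        Or.inl ⟨by rw [Fin.lt_def]; omega, by rw [Fin.lt_def]; omega⟩⟩
    · omega
    · rcases lt_trichotomy k.val j.val with hd | hd | hd
      · exact ⟨0, i, k, j, by rw [sub_zero]; omega, by rw [sub_zero, sub_zero]; omega,
          by rw [sub_zero, sub_zero]; omega,
          by rw [Fin.lt_def]; omega, by rw [Fin.lt_def]; omega, by rw [Fin.lt_def]; omega,
          Or.inl ⟨by rw [Fin.lt_def]; omega, by rw [Fin.lt_def]; omega⟩⟩
      · omega
      · exact ⟨0, i, j, k, by rw [sub_zero]; omega, by rw [sub_zero, sub_zero]; omega,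
          by rw [sub_zero, sub_zero]; omega,
          by rw [Fin.lt_def]; omega, by rw [Fin.lt_def]; omega, by rw [Fin.lt_def]; omega,
          Or.inr ⟨by rw [Fin.lt_def]; omega, by rw [Fin.lt_def]; omega⟩⟩
  -- L4 : among values ≥ 2, larger values sit at smaller positions
  have L4 : ∀ i j : Fin n, 2 ≤ (σ i).val → (σ i).val < (σ j).val → j.val < i.val := by
    intro i j h2 hlt
    have hi0 : i.val ≠ 0 := by
      intro h
      have : (σ i).val = 0 := (hz i).mpr h
      omega
    have hj0 : j.val ≠ 0 := by
      intro h
      have : (σ j).val = 0 := (hz j).mpr h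
      omega
    rcases lt_trichotomy i.val j.val with hc | hc | hc
    · have := L1 i j (by omega) hc hlt; omega
    · exact absurd (Fin.ext hc : i = j) (by intro h; rw [h] at hlt; omega)
    · exact hc
  -- L2 : the position of value 1
  have L2 : k.val = 1 ∨ k.val = n - 2 ∨ k.val = n - 1 := by
    by_contra hcon
    push_neg at hcon
    obtain ⟨hc1, hc2, hc3⟩ := hcon
    have hkr : 2 ≤ k.val ∧ k.val ≤ n - 3 := by have := k.isLt; omega
    obtain ⟨a1, ha1⟩ : ∃ x : Fin n, x.val = 1 := ⟨⟨1, by omega⟩, rfl⟩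
    obtain ⟨b1, hb1⟩ : ∃ x : Fin n, x.val = k.val + 1 := ⟨⟨k.val + 1, by omega⟩, rfl⟩
    obtain ⟨b2, hb2⟩ : ∃ x : Fin n, x.val = k.val + 2 := ⟨⟨k.val + 2, by omega⟩, rfl⟩
    have hvb1 : 2 ≤ (σ b1).val := by
      have h1 : (σ b1).val ≠ 0 := hz' b1 (by omega)
      have h2 : (σ b1).val ≠ 1 := ho' b1 (by intro h; rw [h] at hb1; omega)
      omega
    have hvb2 : 2 ≤ (σ b2).val := by
      have h1 : (σ b2).val ≠ 0 := hz' b2 (by omega)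
      have h2 : (σ b2).val ≠ 1 := ho' b2 (by intro h; rw [h] at hb2; omega)
      omega
    have hva1 : 2 ≤ (σ a1).val := by
      have h1 : (σ a1).val ≠ 0 := hz' a1 (by omega)
      have h2 : (σ a1).val ≠ 1 := ho' a1 (by intro h; rw [h] at ha1; omega)
      omega
    have hb1a1 : (σ b1).val < (σ a1).val := by
      rcases lt_trichotomy ((σ a1).val) ((σ b1).val) with hc | hc | hc
      · have := L1 a1 b1 (by omega) (by omega) hc; omega
      · exact absurd (σ.injective (Fin.ext hc) : a1 = b1) (by
          intro h; rw [h] at ha1; omega)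
      · exact hc
    have hb2a1 : (σ b2).val < (σ a1).val := by
      rcases lt_trichotomy ((σ a1).val) ((σ b2).val) with hc | hc | hc
      · have := L1 a1 b2 (by omega) (by omega) hc; omega
      · exact absurd (σ.injective (Fin.ext hc) : a1 = b2) (by
          intro h; rw [h] at ha1; omega)
      · exact hc
    apply hb
    refine ⟨k, b1, b2, a1, ?_, ?_, ?_, ?_, ?_, ?_, Or.inl ⟨?_, ?_⟩⟩
    · rw [sub_val]; split_ifs <;> omega
    · rw [sub_val, sub_val]; split_ifs <;> omega
    · rw [sub_val, sub_val]; split_ifs <;> omega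
    · rw [Fin.lt_def]; omega
    · rw [Fin.lt_def]; omega
    · rw [Fin.lt_def]; omega
    · rw [Fin.lt_def]; omega
    · rw [Fin.lt_def]; omega
  -- lower bound on positions of values ≥ 2
  have low : ∀ d : ℕ, ∀ i v : Fin n, σ i = v → 2 ≤ v.val → v.val + d = n - 1 →
      n - v.val ≤ i.val := by
    intro d
    induction d with
    | zero =>
      intro i v heq h2 hd
      have : i.val ≠ 0 := by
        intro h
        have : (σ i).val = 0 := (hz i).mpr h
        rw [heq] at this; omega
      omega
    | succ d ih =>
      intro i v heq h2 hd
      obtain ⟨w, hw⟩ : ∃ x : Fin n, x.val = v.val + 1 := ⟨⟨v.val + 1, by omega⟩, rfl⟩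
      obtain ⟨i', hi'⟩ := σ.surjective w
      have h1 := ih i' w hi' (by omega) (by omega)
      have h2' : i'.val < i.val := by
        apply L4 i i' (by rw [heq]; omega) (by rw [heq, hi', hw]; omega)
      omega
  -- upper bound on positions of values ≥ 2
  have high : ∀ d : ℕ, ∀ i v : Fin n, σ i = v → v.val = 2 + d → i.val ≤ n + 1 - v.val := by
    intro d
    induction d with
    | zero =>
      intro i v heq hv
      have := i.isLt; omega
    | succ d ih =>
      intro i v heq hv
      obtain ⟨w, hw⟩ : ∃ x : Fin n, x.val = v.val - 1 := ⟨⟨v.val - 1, by have := v.isLt; omega⟩, rfl⟩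
      obtain ⟨i', hi'⟩ := σ.surjective w
      have h1 := ih i' w hi' (by omega)
      have h2' : i.val < i'.val := by
        apply L4 i' i (by rw [hi']; omega) (by rw [heq, hi', hw]; omega)
      omega
  have hvge2 : ∀ i : Fin n, i.val ≠ 0 → i ≠ k → 2 ≤ (σ i).val := by
    intro i h1 h2
    have e1 : (σ i).val ≠ 0 := hz' i (by omega)
    have e2 : (σ i).val ≠ 1 := ho' i h2
    omega
  rcases L2 with hk | hk | hk
  · -- case A
    left
    have claimA : ∀ d : ℕ, ∀ i v : Fin n, σ i = v → 2 ≤ v.val → v.val + d = n - 1 →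
        i.val = n + 1 - v.val := by
      intro d
      induction d with
      | zero =>
        intro i v heq h2 hd
        have hlow := low 0 i v heq h2 hd
        have hhigh := high (v.val - 2) i v heq (by omega)
        have hik : i ≠ k := by
          intro h
          have e : (σ i).val = 1 := by rw [h]; exact hσkval
          rw [heq] at e
          omega
        have : i.val ≠ 1 := by
          intro h; exact hik (Fin.ext (by omega))
        omega
      | succ d ih =>
        intro i v heq h2 hd
        obtain ⟨w, hw⟩ : ∃ x : Fin n, x.val = v.val + 1 := ⟨⟨v.val + 1, by omega⟩, rfl⟩
        obtain ⟨i', hi'⟩ := σ.surjective w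
        have h1 := ih i' w hi' (by omega) (by omega)
        have h2' : i'.val < i.val := L4 i i' (by rw [heq]; omega) (by rw [heq, hi', hw]; omega)
        have hhigh := high (v.val - 2) i v heq (by omega)
        omega
    funext i
    rw [Fin.ext_iff, fA_val hn]
    have hiI := i.isLt
    by_cases hi0 : i.val = 0
    · have h := (hz i).mpr hi0
      split_ifs <;> omega
    · by_cases hi1 : i.val = 1
      · have : i = k := Fin.ext (by omega)
        have h : (σ i).val = 1 := by rw [this, hσkval]
        split_ifs <;> omega
      · have h2 : 2 ≤ (σ i).val := hvge2 i hi0 (fun h => hi1 (by rw [h]; omega))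
        have hvI := (σ i).isLt
        have hp := claimA (n - 1 - (σ i).val) i (σ i) rfl (by omega) (by omega)
        split_ifs <;> omega
  · -- case B
    right; left
    have pos2 : ∀ i v : Fin n, σ i = v → v.val = 2 → i.val = n - 1 := by
      intro i v heq hv
      have hlow := low (n - 1 - 2) i v heq (by omega) (by omega)
      have hhigh := high 0 i v heq (by omega)
      have hik : i ≠ k := by
        intro h
        have e : (σ i).val = 1 := by rw [h]; exact hσkval
        rw [heq] at e; omega
      have : i.val ≠ n - 2 := by
        intro h; exact hik (Fin.ext (by omega))
      omega
    have claimB : ∀ d : ℕ, ∀ i v : Fin n, σ i = v → v.val = 3 + d → i.val = n - v.val := by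
      intro d
      induction d with
      | zero =>
        intro i v heq hv
        have hlow := low (n - 1 - 3) i v heq (by omega) (by omega)
        have hhigh := high 1 i v heq (by omega)
        have hik : i ≠ k := by
          intro h
          have e : (σ i).val = 1 := by rw [h]; exact hσkval
          rw [heq] at e; omega
        have : i.val ≠ n - 2 := by
          intro h; exact hik (Fin.ext (by omega))
        omega
      | succ d ih =>
        intro i v heq hv
        obtain ⟨w, hw⟩ : ∃ x : Fin n, x.val = v.val - 1 := ⟨⟨v.val - 1, by have := v.isLt; omega⟩, rfl⟩
        obtain ⟨i', hi'⟩ := σ.surjective w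
        have h1 := ih i' w hi' (by omega)
        have h2' : i.val < i'.val := L4 i' i (by rw [hi']; omega) (by rw [heq, hi', hw]; omega)
        have hlow := low (n - 1 - v.val) i v heq (by omega) (by have := v.isLt; omega)
        omega
    funext i
    rw [Fin.ext_iff, fB_val hn]
    have hiI := i.isLt
    by_cases hi0 : i.val = 0
    · have h := (hz i).mpr hi0
      split_ifs <;> omega
    · by_cases hin2 : i.val = n - 2
      · have : i = k := Fin.ext (by omega)
        have h : (σ i).val = 1 := by rw [this, hσkval]
        split_ifs <;> omega
      · have h2 : 2 ≤ (σ i).val := hvge2 i hi0 (fun h => hin2 (by rw [h]; omega))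
        have hvI := (σ i).isLt
        by_cases hv2 : (σ i).val = 2
        · have h := pos2 i (σ i) rfl hv2
          split_ifs <;> omega
        · have hp := claimB ((σ i).val - 3) i (σ i) rfl (by omega)
          have : i.val ≠ n - 1 := by
            intro h
            have hq := pos2 i (σ i) rfl
            omega
          split_ifs <;> omega
  · -- case C
    right; right
    have claimC : ∀ d : ℕ, ∀ i v : Fin n, σ i = v → v.val = 2 + d → i.val = n - v.val := by
      intro d
      induction d with
      | zero =>
        intro i v heq hv
        have hlow := low (n - 1 - 2) i v heq (by omega) (by omega)
        have hhigh := high 0 i v heq (by omega)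
        have hik : i ≠ k := by
          intro h
          have e : (σ i).val = 1 := by rw [h]; exact hσkval
          rw [heq] at e; omega
        have : i.val ≠ n - 1 := by
          intro h; exact hik (Fin.ext (by omega))
        omega
      | succ d ih =>
        intro i v heq hv
        obtain ⟨w, hw⟩ : ∃ x : Fin n, x.val = v.val - 1 := ⟨⟨v.val - 1, by have := v.isLt; omega⟩, rfl⟩
        obtain ⟨i', hi'⟩ := σ.surjective w
        have h1 := ih i' w hi' (by omega)
        have h2' : i.val < i'.val := L4 i' i (by rw [hi']; omega) (by rw [heq, hi', hw]; omega)
        have hlow := low (n - 1 - v.val) i v heq (by omega) (by have := v.isLt; omega)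
        omega
    funext i
    rw [Fin.ext_iff, fC_val hn]
    have hiI := i.isLt
    by_cases hi0 : i.val = 0
    · have h := (hz i).mpr hi0
      split_ifs <;> omega
    · by_cases hin1 : i.val = n - 1
      · have : i = k := Fin.ext (by omega)
        have h : (σ i).val = 1 := by rw [this, hσkval]
        split_ifs <;> omega
      · have h2 : 2 ≤ (σ i).val := hvge2 i hi0 (fun h => hin1 (by rw [h]; omega))
        have hvI := (σ i).isLt
        have hp := claimC ((σ i).val - 2) i (σ i) rfl (by omega)
        split_ifs <;> omega

end AvProof

theorem card_av_1234_1324_1342 (n : ℕ) (hn : 4 ≤ n) :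
    (AvClasses n fun σ => CycAvoids σ ![1,2,3,4] ∧ CycAvoids σ ![1,3,2,4] ∧ CycAvoids σ ![1,3,4,2]).ncard = 3 := by
  classical
  have hnz : NeZero n := ⟨by omega⟩
  set P : (Fin n → Fin n) → Prop := fun σ =>
    CycAvoids σ ![1,2,3,4] ∧ CycAvoids σ ![1,3,2,4] ∧ CycAvoids σ ![1,3,4,2] with hP
  have v00 : (0 : Fin n).val = 0 := by simp
  -- the three explicit permutations
  have bijA : Function.Bijective (AvProof.fA n) :=
    Finite.injective_iff_bijective.mp (AvProof.fA_inj hn)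
  have bijB : Function.Bijective (AvProof.fB n) :=
    Finite.injective_iff_bijective.mp (AvProof.fB_inj hn)
  have bijC : Function.Bijective (AvProof.fC n) :=
    Finite.injective_iff_bijective.mp (AvProof.fC_inj hn)
  have hA0 : AvProof.fA n 0 = 0 := by
    rw [Fin.ext_iff, AvProof.fA_val hn, v00]
    split_ifs <;> omega
  have hB0 : AvProof.fB n 0 = 0 := by
    rw [Fin.ext_iff, AvProof.fB_val hn, v00]
    split_ifs <;> omega
  have hC0 : AvProof.fC n 0 = 0 := by
    rw [Fin.ext_iff, AvProof.fC_val hn, v00]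
    split_ifs <;> omega
  -- P holds for a function iff it is not Bad
  have avoid_iff : ∀ σ : Fin n → Fin n, Function.Injective σ → (P σ ↔ ¬ AvProof.Bad σ) := by
    intro σ hinj
    constructor
    · rintro ⟨ha, hb, hc⟩ hbad
      rcases AvProof.bad_contains hinj hbad with h | h | h
      · exact ha h
      · exact hb h
      · exact hc h
    · intro hnb
      refine ⟨fun h => hnb (AvProof.contains_bad (Or.inl h)),
        fun h => hnb (AvProof.contains_bad (Or.inr (Or.inl h))),
        fun h => hnb (AvProof.contains_bad (Or.inr (Or.inr h)))⟩
  have memX : ∀ g : Fin n → Fin n, Function.Bijective g → g 0 = 0 → ¬ AvProof.Bad g →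
      CycClass g ∈ AvClasses n P := by
    intro g hbij hg0 hnb
    exact ⟨Equiv.ofBijective g hbij, rfl, (avoid_iff g hbij.injective).mpr hnb⟩
  -- distinctness
  have distinct : ∀ g h : Fin n → Fin n, Function.Injective g → g 0 = 0 → h 0 = 0 →
      CycClass g = CycClass h → g = h := fun g h hg h1 h2 hcl =>
    AvProof.eq_of_class_eq hg h1 h2 hcl
  rw [Set.ncard_eq_three]
  refine ⟨CycClass (AvProof.fA n), CycClass (AvProof.fB n), CycClass (AvProof.fC n),
    ?_, ?_, ?_, ?_⟩
  · intro h
    obtain ⟨x1, hx1⟩ : ∃ x : Fin n, x.val = 1 := ⟨⟨1, by omega⟩, rfl⟩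
    have he := distinct _ _ (AvProof.fA_inj hn) hA0 hB0 h
    have hc := congrArg Fin.val (congrFun he x1)
    rw [AvProof.fA_val hn, AvProof.fB_val hn] at hc
    split_ifs at hc <;> omega
  · intro h
    obtain ⟨x1, hx1⟩ : ∃ x : Fin n, x.val = 1 := ⟨⟨1, by omega⟩, rfl⟩
    have he := distinct _ _ (AvProof.fA_inj hn) hA0 hC0 h
    have hc := congrArg Fin.val (congrFun he x1)
    rw [AvProof.fA_val hn, AvProof.fC_val hn] at hc
    split_ifs at hc <;> omega
  · intro h
    obtain ⟨x1, hx1⟩ : ∃ x : Fin n, x.val = n - 1 := ⟨⟨n - 1, by omega⟩, rfl⟩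
    have he := distinct _ _ (AvProof.fB_inj hn) hB0 hC0 h
    have hc := congrArg Fin.val (congrFun he x1)
    rw [AvProof.fB_val hn, AvProof.fC_val hn] at hc
    split_ifs at hc <;> omega
  · ext C
    simp only [Set.mem_insert_iff, Set.mem_singleton_iff]
    constructor
    · rintro ⟨τ, rfl, hPτ⟩
      set r : Fin n := τ.symm 0 with hr
      set ρ : Fin n → Fin n := rotSeq (⇑τ) r with hρ
      have hρco : ⇑((Equiv.addRight r).trans τ) = ρ := rfl
      have hρinj : Function.Injective ρ := by
        rw [← hρco]; exact Equiv.injective _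
      have hρ0 : ρ 0 = 0 := by
        show τ (0 + r) = 0
        rw [zero_add, hr, Equiv.apply_symm_apply]
      have hPρ : P ρ := by
        obtain ⟨h1, h2, h3⟩ := hPτ
        refine ⟨fun c => h1 ?_, fun c => h2 ?_, fun c => h3 ?_⟩ <;>
          rwa [hρ, AvProof.cycContains_rotSeq] at c
      have hnbρ : ¬ AvProof.Bad ρ := (avoid_iff ρ hρinj).mp hPρ
      have hclass : CycClass ρ = CycClass ⇑τ := AvProof.cycClass_rotSeq (⇑τ) r
      rcases AvProof.classify hn ((Equiv.addRight r).trans τ)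
          (by rw [hρco]; exact hρ0) (by rw [hρco]; exact hnbρ) with hc | hc | hc
      · left; rw [← hclass, ← hρco, hc]
      · right; left; rw [← hclass, ← hρco, hc]
      · right; right; rw [← hclass, ← hρco, hc]
    · rintro (rfl | rfl | rfl)
      · exact memX _ bijA hA0 (AvProof.notBad_fA hn)
      · exact memX _ bijB hB0 (AvProof.notBad_fB hn)
      · exact memX _ bijC hC0 (AvProof.notBad_fC hn)
end

section
/- For every integer n ≥ 5, the number of cyclic permutations of length n avoiding all three cyclic patterns [1234], [1243], and [1342] equals 2; that is, #Av_n([1234],[1243],[1342]) = 2. -/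
namespace CycProof
variable {n : ℕ}

lemma fin4cases (i : Fin 4) : i = 0 ∨ i = 1 ∨ i = 2 ∨ i = 3 := by omega

lemma strictMono4 {a b c d : Fin n} (hab : (a:ℕ) < b) (hbc : (b:ℕ) < c) (hcd : (c:ℕ) < d) :
    StrictMono ![a, b, c, d] := by
  intro i j hij
  rcases fin4cases i with rfl|rfl|rfl|rfl <;> rcases fin4cases j with rfl|rfl|rfl|rfl <;>
    simp only [Matrix.cons_val_zero, Matrix.cons_val_one, Matrix.head_cons,
      Matrix.cons_val_two, Matrix.tail_cons, Matrix.cons_val_three, Fin.lt_def] at hij ⊢ <;>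
    omega

lemma contains1234 {σ : Fin n → Fin n} {a b c d : Fin n}
    (hab : (a:ℕ) < b) (hbc : (b:ℕ) < c) (hcd : (c:ℕ) < d)
    (h1 : (σ a:ℕ) < σ b) (h2 : (σ b:ℕ) < σ c) (h3 : (σ c:ℕ) < σ d) :
    ContainsPat σ ![1,2,3,4] := by
  refine ⟨![a,b,c,d], strictMono4 hab hbc hcd, ?_⟩
  intro i j
  rcases fin4cases i with rfl|rfl|rfl|rfl <;> rcases fin4cases j with rfl|rfl|rfl|rfl <;>
    simp only [Matrix.cons_val_zero, Matrix.cons_val_one, Matrix.head_cons,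
      Matrix.cons_val_two, Matrix.tail_cons, Matrix.cons_val_three, Fin.lt_def] <;>
    omega
lemma contains1243 {σ : Fin n → Fin n} {a b c d : Fin n}
    (hab : (a:ℕ) < b) (hbc : (b:ℕ) < c) (hcd : (c:ℕ) < d)
    (h1 : (σ a:ℕ) < σ b) (h2 : (σ b:ℕ) < σ d) (h3 : (σ d:ℕ) < σ c) :
    ContainsPat σ ![1,2,4,3] := by
  refine ⟨![a,b,c,d], strictMono4 hab hbc hcd, ?_⟩
  intro i j
  rcases fin4cases i with rfl|rfl|rfl|rfl <;> rcases fin4cases j with rfl|rfl|rfl|rfl <;>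
    simp only [Matrix.cons_val_zero, Matrix.cons_val_one, Matrix.head_cons,
      Matrix.cons_val_two, Matrix.tail_cons, Matrix.cons_val_three, Fin.lt_def] <;>
    omega

lemma contains1342 {σ : Fin n → Fin n} {a b c d : Fin n}
    (hab : (a:ℕ) < b) (hbc : (b:ℕ) < c) (hcd : (c:ℕ) < d)
    (h1 : (σ a:ℕ) < σ d) (h2 : (σ d:ℕ) < σ b) (h3 : (σ b:ℕ) < σ c) :
    ContainsPat σ ![1,3,4,2] := by
  refine ⟨![a,b,c,d], strictMono4 hab hbc hcd, ?_⟩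
  intro i j
  rcases fin4cases i with rfl|rfl|rfl|rfl <;> rcases fin4cases j with rfl|rfl|rfl|rfl <;>
    simp only [Matrix.cons_val_zero, Matrix.cons_val_one, Matrix.head_cons,
      Matrix.cons_val_two, Matrix.tail_cons, Matrix.cons_val_three, Fin.lt_def] <;>
    omega

lemma quad_of_contains {σ : Fin n → Fin n} {π : Fin 4 → ℕ} (h : ContainsPat σ π) :
    ∃ a b c d : Fin n, (a:ℕ) < b ∧ (b:ℕ) < c ∧ (c:ℕ) < d ∧
      (π 0 < π 1 → (σ a:ℕ) < σ b) ∧ (π 1 < π 2 → (σ b:ℕ) < σ c) ∧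
      (π 0 < π 3 → (σ a:ℕ) < σ d) := by
  obtain ⟨f, hf, hiff⟩ := h
  exact ⟨f 0, f 1, f 2, f 3,
    Fin.lt_def.mp (hf (by decide)), Fin.lt_def.mp (hf (by decide)),
    Fin.lt_def.mp (hf (by decide)),
    fun hp => Fin.lt_def.mp ((hiff _ _).mp hp),
    fun hp => Fin.lt_def.mp ((hiff _ _).mp hp),
    fun hp => Fin.lt_def.mp ((hiff _ _).mp hp)⟩

def V (n : ℕ) (τ : Fin n → Fin n) (x : ℕ) : ℕ :=
  if h : x < n then (τ ⟨x, h⟩ : ℕ) else 0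

lemma V_eq (τ : Fin n → Fin n) {x : ℕ} (h : x < n) : V n τ x = τ ⟨x, h⟩ := dif_pos h

lemma rot_val (τ : Fin n → Fin n) (hn : 0 < n) {a r : ℕ} (ha : a < n) (hr : r < n) :
    (rotSeq τ ⟨r, hr⟩ ⟨a, ha⟩ : ℕ) = V n τ ((a + r) % n) := by
  rw [V_eq τ (Nat.mod_lt _ hn)]
  show (τ (⟨a, ha⟩ + ⟨r, hr⟩) : ℕ) = _
  rfl

lemma occ1234 {τ : Fin n → Fin n} (hn : 0 < n) {r a b c d : ℕ} (hr : r < n)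
    (hab : a < b) (hbc : b < c) (hcd : c < d) (hd : d < n)
    (h1 : V n τ ((a+r)%n) < V n τ ((b+r)%n))
    (h2 : V n τ ((b+r)%n) < V n τ ((c+r)%n))
    (h3 : V n τ ((c+r)%n) < V n τ ((d+r)%n)) :
    CycContains τ ![1,2,3,4] := by
  refine ⟨⟨r, hr⟩, contains1234 (a := ⟨a, by omega⟩) (b := ⟨b, by omega⟩)
    (c := ⟨c, by omega⟩) (d := ⟨d, by omega⟩) hab hbc hcd ?_ ?_ ?_⟩ <;>
  · rw [rot_val τ hn (by omega) hr, rot_val τ hn (by omega) hr]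
    assumption

lemma occ1243 {τ : Fin n → Fin n} (hn : 0 < n) {r a b c d : ℕ} (hr : r < n)
    (hab : a < b) (hbc : b < c) (hcd : c < d) (hd : d < n)
    (h1 : V n τ ((a+r)%n) < V n τ ((b+r)%n))
    (h2 : V n τ ((b+r)%n) < V n τ ((d+r)%n))
    (h3 : V n τ ((d+r)%n) < V n τ ((c+r)%n)) :
    CycContains τ ![1,2,4,3] := by
  refine ⟨⟨r, hr⟩, contains1243 (a := ⟨a, by omega⟩) (b := ⟨b, by omega⟩)
    (c := ⟨c, by omega⟩) (d := ⟨d, by omega⟩) hab hbc hcd ?_ ?_ ?_⟩ <;>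
  · rw [rot_val τ hn (by omega) hr, rot_val τ hn (by omega) hr]
    assumption

lemma occ1342 {τ : Fin n → Fin n} (hn : 0 < n) {r a b c d : ℕ} (hr : r < n)
    (hab : a < b) (hbc : b < c) (hcd : c < d) (hd : d < n)
    (h1 : V n τ ((a+r)%n) < V n τ ((d+r)%n))
    (h2 : V n τ ((d+r)%n) < V n τ ((b+r)%n))
    (h3 : V n τ ((b+r)%n) < V n τ ((c+r)%n)) :
    CycContains τ ![1,3,4,2] := by
  refine ⟨⟨r, hr⟩, contains1342 (a := ⟨a, by omega⟩) (b := ⟨b, by omega⟩)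
    (c := ⟨c, by omega⟩) (d := ⟨d, by omega⟩) hab hbc hcd ?_ ?_ ?_⟩ <;>
  · rw [rot_val τ hn (by omega) hr, rot_val τ hn (by omega) hr]
    assumption
lemma rot_rot {m : ℕ} (σ : Fin (m+1) → Fin (m+1)) (r s : Fin (m+1)) :
    rotSeq (rotSeq σ r) s = rotSeq σ (s + r) := by
  funext i
  show σ ((i + s) + r) = σ (i + (s + r))
  rw [add_assoc]

lemma cycContains_rot {m k : ℕ} (σ : Fin (m+1) → Fin (m+1)) (r : Fin (m+1)) (π : Fin k → ℕ) :
    CycContains (rotSeq σ r) π ↔ CycContains σ π := by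
  constructor
  · rintro ⟨s, hs⟩
    exact ⟨s + r, by rwa [rot_rot] at hs⟩
  · rintro ⟨s, hs⟩
    refine ⟨s - r, ?_⟩
    rwa [rot_rot, sub_add_cancel]

lemma cycClass_rot {m : ℕ} (σ : Fin (m+1) → Fin (m+1)) (r : Fin (m+1)) :
    CycClass (rotSeq σ r) = CycClass σ := by
  ext g
  constructor
  · rintro ⟨s, rfl⟩
    exact ⟨s + r, (rot_rot σ r s).symm⟩
  · rintro ⟨s, rfl⟩
    exact ⟨s - r, by rw [rot_rot, sub_add_cancel]⟩

def t2fun (n : ℕ) : ℕ → ℕ := fun x => if x = 0 then 0 else if x = n - 1 then n - 1 else n - 1 - x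

def r1fun (n : ℕ) : ℕ → ℕ := fun x => if x = n - 1 then n - 1 else n - 2 - x

def tperm (n : ℕ) : Equiv.Perm (Fin n) where
  toFun i := ⟨t2fun n i, by have := i.isLt; unfold t2fun; split_ifs <;> omega⟩
  invFun i := ⟨t2fun n i, by have := i.isLt; unfold t2fun; split_ifs <;> omega⟩
  left_inv i := by
    have := i.isLt
    ext
    show t2fun n (t2fun n i) = i
    unfold t2fun
    split_ifs <;> omega
  right_inv i := by
    have := i.isLt
    ext
    show t2fun n (t2fun n i) = i
    unfold t2fun
    split_ifs <;> omega

def rperm (n : ℕ) : Equiv.Perm (Fin n) where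
  toFun i := i.rev
  invFun i := i.rev
  left_inv i := Fin.rev_rev i
  right_inv i := Fin.rev_rev i

lemma tperm_val (x : Fin n) : ((tperm n x : Fin n) : ℕ) = t2fun n x := rfl

lemma rperm_val (x : Fin n) : ((rperm n x : Fin n) : ℕ) = n - 1 - x := by
  show (x.rev : ℕ) = n - 1 - x
  rw [Fin.val_rev]
  omega

lemma avoids_three_of (hn : 0 < n) (σ : Fin n → Fin n)
    (H : ∀ (r a b c d : ℕ), r < n → a < b → b < c → c < d → d < n →
      V n σ ((a+r)%n) < V n σ ((b+r)%n) → V n σ ((b+r)%n) < V n σ ((c+r)%n) →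
      V n σ ((a+r)%n) < V n σ ((d+r)%n) → False) :
    CycAvoids σ ![1,2,3,4] ∧ CycAvoids σ ![1,2,4,3] ∧ CycAvoids σ ![1,3,4,2] := by
  have key : ∀ π : Fin 4 → ℕ, π 0 < π 1 → π 1 < π 2 → π 0 < π 3 → ¬ CycContains σ π := by
    rintro π p1 p2 p3 ⟨r, hc⟩
    obtain ⟨a, b, c, d, hab, hbc, hcd, q1, q2, q3⟩ := quad_of_contains hc
    have hra : (rotSeq σ r a : ℕ) = V n σ (((a:ℕ) + r) % n) := by
      rw [← rot_val σ hn a.isLt r.isLt]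
    have hrb : (rotSeq σ r b : ℕ) = V n σ (((b:ℕ) + r) % n) := by
      rw [← rot_val σ hn b.isLt r.isLt]
    have hrc : (rotSeq σ r c : ℕ) = V n σ (((c:ℕ) + r) % n) := by
      rw [← rot_val σ hn c.isLt r.isLt]
    have hrd : (rotSeq σ r d : ℕ) = V n σ (((d:ℕ) + r) % n) := by
      rw [← rot_val σ hn d.isLt r.isLt]
    exact H r a b c d r.isLt hab hbc hcd d.isLt
      (by rw [← hra, ← hrb]; exact q1 p1)
      (by rw [← hrb, ← hrc]; exact q2 p2)
      (by rw [← hra, ← hrd]; exact q3 p3)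
  exact ⟨key _ (by norm_num) (by decide) (by decide),
    key _ (by norm_num) (by decide) (by decide),
    key _ (by norm_num) (by decide) (by decide)⟩
lemma modsplit {x n : ℕ} (h : x < 2 * n) (h2 : 0 < n) :
    x % n = x ∨ (n ≤ x ∧ x % n = x - n) := by
  rcases Nat.lt_or_ge x n with h' | h'
  · exact Or.inl (Nat.mod_eq_of_lt h')
  · right
    refine ⟨h', ?_⟩
    rw [Nat.mod_eq_sub_mod h']
    exact Nat.mod_eq_of_lt (by omega)

lemma modkey {r n : ℕ} (hr : r < n) (x : ℕ) (hx : x < n) :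
    ∃ g, g < n ∧ (x + r) % n = g ∧ (g = x + r ∨ g + n = x + r) := by
  refine ⟨(x + r) % n, Nat.mod_lt _ (by omega), rfl, ?_⟩
  rcases modsplit (x := x + r) (n := n) (by omega) (by omega) with h | ⟨h1, h2⟩ <;> omega

lemma t2fun_lt (hn : 5 ≤ n) {g h : ℕ} (hg : g < n) (hh : h < n) :
    (t2fun n g < t2fun n h ↔ (g ≠ h ∧ (g = 0 ∨ h = n - 1 ∨ (h ≠ 0 ∧ g ≠ n - 1 ∧ h < g)))) := by
  unfold t2fun
  split_ifs <;> omega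

lemma rperm_avoids (hn : 5 ≤ n) :
    CycAvoids (⇑(rperm n)) ![1,2,3,4] ∧ CycAvoids (⇑(rperm n)) ![1,2,4,3] ∧
      CycAvoids (⇑(rperm n)) ![1,3,4,2] := by
  apply avoids_three_of (by omega)
  intro r a b c d hr hab hbc hcd hd h1 h2 h3
  have e : ∀ x : ℕ, x < n → V n (⇑(rperm n)) ((x + r) % n) = n - 1 - ((x + r) % n) := by
    intro x hx
    rw [V_eq _ (Nat.mod_lt _ (by omega))]
    exact rperm_val _
  rw [e a (by omega), e b (by omega)] at h1
  rw [e b (by omega), e c (by omega)] at h2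
  obtain ⟨A, hAn, hAe, hA⟩ := modkey hr a (by omega)
  obtain ⟨B, hBn, hBe, hB⟩ := modkey hr b (by omega)
  obtain ⟨C, hCn, hCe, hC⟩ := modkey hr c (by omega)
  rw [hAe, hBe] at h1
  rw [hBe, hCe] at h2
  omega

lemma tperm_avoids (hn : 5 ≤ n) :
    CycAvoids (⇑(tperm n)) ![1,2,3,4] ∧ CycAvoids (⇑(tperm n)) ![1,2,4,3] ∧
      CycAvoids (⇑(tperm n)) ![1,3,4,2] := by
  apply avoids_three_of (by omega)
  intro r a b c d hr hab hbc hcd hd h1 h2 h3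
  have e : ∀ x : ℕ, x < n → V n (⇑(tperm n)) ((x + r) % n) = t2fun n ((x + r) % n) := by
    intro x hx
    rw [V_eq _ (Nat.mod_lt _ (by omega))]
    exact tperm_val _
  rw [e a (by omega), e b (by omega)] at h1
  rw [e b (by omega), e c (by omega)] at h2
  rw [e a (by omega), e d (by omega)] at h3
  obtain ⟨A, hAn, hAe, hA⟩ := modkey hr a (by omega)
  obtain ⟨B, hBn, hBe, hB⟩ := modkey hr b (by omega)
  obtain ⟨C, hCn, hCe, hC⟩ := modkey hr c (by omega)
  obtain ⟨D, hDn, hDe, hD⟩ := modkey hr d (by omega)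
  rw [hAe, hBe, t2fun_lt hn hAn hBn] at h1
  rw [hBe, hCe, t2fun_lt hn hBn hCn] at h2
  rw [hAe, hDe, t2fun_lt hn hAn hDn] at h3
  omega
lemma classify (hn : 5 ≤ n) (τ : Equiv.Perm (Fin n))
    (hmax : V n ⇑τ (n-1) = n-1)
    (h1234 : CycAvoids (⇑τ) ![1,2,3,4]) (h1243 : CycAvoids (⇑τ) ![1,2,4,3])
    (h1342 : CycAvoids (⇑τ) ![1,3,4,2]) :
    (∀ x, x < n → V n ⇑τ x = r1fun n x) ∨ (∀ x, x < n → V n ⇑τ x = t2fun n x) := by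
  set w := V n ⇑τ with hw
  have hbd : ∀ x, x < n → w x < n := by
    intro x hx
    rw [hw, V_eq _ hx]
    exact (τ _).isLt
  have hinj : ∀ x y, x < n → y < n → w x = w y → x = y := by
    intro x y hx hy hxy
    rw [hw, V_eq _ hx, V_eq _ hy] at hxy
    have := τ.injective (Fin.ext hxy)
    exact congrArg Fin.val this
  have hsurj : ∀ y, y < n → ∃ x, x < n ∧ w x = y := by
    intro y hy
    obtain ⟨i, hi⟩ := τ.surjective ⟨y, hy⟩
    refine ⟨i, i.isLt, ?_⟩
    rw [hw, V_eq _ i.isLt]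
    simp [Fin.eta, hi]
  -- no-occurrence facts
  have N1234 : ∀ r a b c d : ℕ, r < n → a < b → b < c → c < d → d < n →
      w ((a+r)%n) < w ((b+r)%n) → w ((b+r)%n) < w ((c+r)%n) →
      w ((c+r)%n) < w ((d+r)%n) → False := by
    intro r a b c d hr hab hbc hcd hd k1 k2 k3
    exact h1234 (occ1234 (by omega) hr hab hbc hcd hd k1 k2 k3)
  have N1243 : ∀ r a b c d : ℕ, r < n → a < b → b < c → c < d → d < n →
      w ((a+r)%n) < w ((b+r)%n) → w ((b+r)%n) < w ((d+r)%n) →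
      w ((d+r)%n) < w ((c+r)%n) → False := by
    intro r a b c d hr hab hbc hcd hd k1 k2 k3
    exact h1243 (occ1243 (by omega) hr hab hbc hcd hd k1 k2 k3)
  have N1342 : ∀ r a b c d : ℕ, r < n → a < b → b < c → c < d → d < n →
      w ((a+r)%n) < w ((d+r)%n) → w ((d+r)%n) < w ((b+r)%n) →
      w ((b+r)%n) < w ((c+r)%n) → False := by
    intro r a b c d hr hab hbc hcd hd k1 k2 k3
    exact h1342 (occ1342 (by omega) hr hab hbc hcd hd k1 k2 k3)
  -- Step A : no increasing triple among the first n-1 positions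
  have noinc : ∀ a b c : ℕ, a < b → b < c → c ≤ n-2 → w a < w b → w b < w c → False := by
    intro a b c hab hbc hc k1 k2
    have m1 : (a + 0) % n = a := by rw [Nat.add_zero]; exact Nat.mod_eq_of_lt (by omega)
    have m2 : (b + 0) % n = b := by rw [Nat.add_zero]; exact Nat.mod_eq_of_lt (by omega)
    have m3 : (c + 0) % n = c := by rw [Nat.add_zero]; exact Nat.mod_eq_of_lt (by omega)
    have m4 : ((n-1) + 0) % n = n-1 := by rw [Nat.add_zero]; exact Nat.mod_eq_of_lt (by omega)
    have hcm : w c < n - 1 := by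
      have h1 := hbd c (by omega)
      have h2 : w c ≠ n - 1 := fun e => by
        have := hinj c (n-1) (by omega) (by omega) (by rw [e, hmax])
        omega
      omega
    apply N1234 0 a b c (n-1) (by omega) hab hbc (by omega) (by omega)
    · rwa [m1, m2]
    · rwa [m2, m3]
    · rw [m3, m4, hmax]; omega
  -- Step B
  have star : ∀ s a b : ℕ, s < a → a < b → b ≤ n-2 → w a < w b → w s < w a := by
    intro s a b hsa hab hb hv
    by_contra hge
    push_neg at hge
    have hneq : w s ≠ w a := fun e => by
      have := hinj s a (by omega) (by omega) e
      omega
    have hwa : w a < w s := by omega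
    have hsn1 : w s < n - 1 := by
      have g1 := hbd s (by omega)
      have g2 : w s ≠ n - 1 := fun e => by
        have := hinj s (n-1) (by omega) (by omega) (by rw [e, hmax])
        omega
      omega
    have m1 : (0 + a) % n = a := by rw [Nat.zero_add]; exact Nat.mod_eq_of_lt (by omega)
    have m2 : ((b - a) + a) % n = b := by
      rw [Nat.sub_add_cancel (by omega)]; exact Nat.mod_eq_of_lt (by omega)
    have m3 : ((n - 1 - a) + a) % n = n - 1 := by
      rw [Nat.sub_add_cancel (by omega)]; exact Nat.mod_eq_of_lt (by omega)
    have m4 : ((n + s - a) + a) % n = s := by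
      rw [Nat.sub_add_cancel (by omega), show n + s = s + n from by omega,
        Nat.add_mod_right]
      exact Nat.mod_eq_of_lt (by omega)
    have hbm : w b < n - 1 := by
      have g1 := hbd b (by omega)
      have g2 : w b ≠ n - 1 := fun e => by
        have := hinj b (n-1) (by omega) (by omega) (by rw [e, hmax])
        omega
      omega
    have hwsb : w s ≠ w b := fun e => by
      have := hinj s b (by omega) (by omega) e
      omega
    rcases Nat.lt_or_ge (w s) (w b) with hlt | hge2
    · -- w a < w s < w b : 1342
      apply N1342 a 0 (b-a) (n-1-a) (n+s-a) (by omega) (by omega) (by omega) (by omega)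
        (by omega)
      · rwa [m1, m4]
      · rwa [m4, m2]
      · rw [m2, m3, hmax]; omega
    · -- w b < w s : 1243
      apply N1243 a 0 (b-a) (n-1-a) (n+s-a) (by omega) (by omega) (by omega) (by omega)
        (by omega)
      · rwa [m1, m2]
      · rw [m2, m4]; omega
      · rw [m4, m3, hmax]; omega
  -- Step C : strictly decreasing on [1, n-2]
  have hdec : ∀ a b : ℕ, 1 ≤ a → a < b → b ≤ n-2 → w b < w a := by
    intro a b h1a hab hb
    by_contra hge
    push_neg at hge
    have hneq : w a ≠ w b := fun e => by
      have := hinj a b (by omega) (by omega) e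
      omega
    have hv : w a < w b := by omega
    exact noinc (a-1) a b (by omega) hab hb (star (a-1) a b (by omega) hab hb hv) hv
  -- bounds
  have Up : ∀ i, 1 ≤ i → i ≤ n-2 → w i ≤ n-1-i := by
    intro i
    induction i with
    | zero => omega
    | succ k ih =>
      intro h1 h2
      rcases Nat.eq_zero_or_pos k with rfl | hlt
      · show w 1 ≤ n - 1 - 1
        have g1 := hbd 1 (by omega)
        have g2 : w 1 ≠ n - 1 := fun e => by
          have := hinj 1 (n-1) (by omega) (by omega) (by rw [e, hmax])
          omega
        omega
      · have hk := ih (by omega) (by omega)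
        have := hdec k (k+1) (by omega) (by omega) (by omega)
        omega
  have Lo : ∀ i, 1 ≤ i → i ≤ n-2 → n-2-i ≤ w i := by
    have aux : ∀ k, k ≤ n-3 → k ≤ w (n-2-k) := by
      intro k
      induction k with
      | zero => omega
      | succ k ih =>
        intro hk
        have g1 := ih (by omega)
        have g2 := hdec (n-2-(k+1)) (n-2-k) (by omega) (by omega) (by omega)
        omega
    intro i h1 h2
    have := aux (n-2-i) (by omega)
    have e : n-2-(n-2-i) = i := by omega
    rw [e] at this
    omega
  -- propagation
  have propUp : ∀ i, 1 ≤ i → i ≤ n-2 → w i = n-2-i →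
      ∀ j, i ≤ j → j ≤ n-2 → w j = n-2-j := by
    intro i hi1 hi2 hwi j
    induction j with
    | zero => exact fun h1 _ => absurd (le_trans hi1 h1) (by omega)
    | succ k ih =>
      intro hik hk2
      rcases Nat.eq_or_lt_of_le hik with he | hlt
      · rw [← he]; exact hwi
      · have hwk := ih (by omega) (by omega)
        have hd := hdec k (k+1) (by omega) (by omega) (by omega)
        have hlo := Lo (k+1) (by omega) (by omega)
        omega
  have propDn : ∀ k, 1 ≤ k → k ≤ n-2 → w k = n-1-k →
      ∀ i, 1 ≤ i → i ≤ k → w i = n-1-i := by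
    intro k hk1 hk2 hwk i hi1 hik
    have hup := Up i hi1 (by omega)
    have hlo := Lo i hi1 (by omega)
    by_contra hne
    have : w i = n-2-i := by omega
    have := propUp i hi1 (by omega) this k (by omega) (by omega)
    omega
  -- main case analysis on x = w 0
  have hx0 : w 0 ≤ n-2 := by
    have g1 := hbd 0 (by omega)
    have g2 : w 0 ≠ n - 1 := fun e => by
      have := hinj 0 (n-1) (by omega) (by omega) (by rw [e, hmax])
      omega
    omega
  rcases Nat.eq_or_lt_of_le hx0 with hxtop | hxlt
  · -- w 0 = n-2 : class 1
    left
    have hw1 : w 1 = n-3 := by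
      have hup := Up 1 (by omega) (by omega)
      have hlo := Lo 1 (by omega) (by omega)
      have : w 1 ≠ n-2 := fun e => by
        have := hinj 1 0 (by omega) (by omega) (by rw [e, ← hxtop])
        omega
      omega
    intro y hy
    unfold r1fun
    rcases Nat.eq_or_lt_of_le (show y ≤ n-1 from by omega) with he | hlt
    · rw [if_pos he, he, hmax]
    · rw [if_neg (by omega)]
      rcases Nat.eq_zero_or_pos y with rfl | hy1
      · omega
      · exact propUp 1 (by omega) (by omega) (by omega) y (by omega) (by omega)
  · -- w 0 ≤ n-3
    rcases Nat.eq_zero_or_pos (w 0) with hx0eq | hxpos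
    · -- w 0 = 0 : class 2
      right
      have hwn2 : w (n-2) = 1 := by
        have hup := Up (n-2) (by omega) (by omega)
        have hlo := Lo (n-2) (by omega) (by omega)
        have : w (n-2) ≠ 0 := fun e => by
          have := hinj (n-2) 0 (by omega) (by omega) (by rw [e, hx0eq])
          omega
        omega
      intro y hy
      unfold t2fun
      rcases Nat.eq_zero_or_pos y with rfl | hy1
      · rw [if_pos rfl]; exact hx0eq
      · rw [if_neg (by omega)]
        rcases Nat.eq_or_lt_of_le (show y ≤ n-1 from by omega) with he | hlt
        · rw [if_pos he, he, hmax]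
        · rw [if_neg (by omega)]
          exact propDn (n-2) (by omega) (by omega) (by omega) y (by omega) (by omega)
    · -- 1 ≤ w 0 ≤ n-3 : contradiction
      exfalso
      -- w (n-2) = 0
      have hwn2 : w (n-2) = 0 := by
        obtain ⟨y, hy, hy0⟩ := hsurj 0 (by omega)
        have hy00 : y ≠ 0 := fun e => by rw [e] at hy0; omega
        have hyn1 : y ≠ n-1 := fun e => by rw [e, hmax] at hy0; omega
        have := Lo y (by omega) (by omega)
        have : y = n-2 := by omega
        rwa [← this]
      -- w 1 = n-2
      have hw1 : w 1 = n-2 := by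
        obtain ⟨y, hy, hyv⟩ := hsurj (n-2) (by omega)
        have hy00 : y ≠ 0 := fun e => by rw [e] at hyv; omega
        have hyn1 : y ≠ n-1 := fun e => by rw [e, hmax] at hyv; omega
        have := Up y (by omega) (by omega)
        have : y = 1 := by omega
        rwa [← this]
      have m1 : (0 + (n-2)) % n = n-2 := by
        rw [Nat.zero_add]; exact Nat.mod_eq_of_lt (by omega)
      have m2 : (2 + (n-2)) % n = 0 := by
        rw [show 2 + (n-2) = n from by omega, Nat.mod_self]
      have m3 : (3 + (n-2)) % n = 1 := by
        rw [show 3 + (n-2) = 1 + n from by omega, Nat.add_mod_right]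
        exact Nat.mod_eq_of_lt (by omega)
      rcases Nat.eq_or_lt_of_le hxpos with hx1 | hx2
      · -- w 0 = 1 : use 1243 occurrence (0,2,3,n-1) at rotation n-2
        have hwn3 : w (n-3) = 2 := by
          have hup := Up (n-3) (by omega) (by omega)
          have hlo := Lo (n-3) (by omega) (by omega)
          have : w (n-3) ≠ 1 := fun e => by
            have := hinj (n-3) 0 (by omega) (by omega) (by rw [e, ← hx1])
            omega
          omega
        have m4 : ((n-1) + (n-2)) % n = n-3 := by
          rw [show (n-1) + (n-2) = (n-3) + n from by omega, Nat.add_mod_right]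
          exact Nat.mod_eq_of_lt (by omega)
        apply N1243 (n-2) 0 2 3 (n-1) (by omega) (by omega) (by omega) (by omega) (by omega)
        · rw [m1, m2, hwn2, ← hx1]; omega
        · rw [m2, m4, ← hx1, hwn3]; omega
        · rw [m4, m3, hwn3, hw1]; omega
      · -- 2 ≤ w 0 ≤ n-3 : use 1342 occurrence (0,2,3,j+2) at rotation n-2
        set x := w 0 with hxdef
        set j := n-1-x with hjdef
        have hj2 : 2 ≤ j := by omega
        have hjn3 : j ≤ n-3 := by omega
        have hwj : w j = x - 1 := by
          have hup := Up j (by omega) (by omega)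
          have hlo := Lo j (by omega) (by omega)
          have : w j ≠ x := fun e => by
            have := hinj j 0 (by omega) (by omega) (by rw [e])
            omega
          omega
        have m4 : ((j+2) + (n-2)) % n = j := by
          rw [show (j+2) + (n-2) = j + n from by omega, Nat.add_mod_right]
          exact Nat.mod_eq_of_lt (by omega)
        apply N1342 (n-2) 0 2 3 (j+2) (by omega) (by omega) (by omega) (by omega) (by omega)
        · rw [m1, m4, hwn2, hwj]; omega
        · rw [m4, m2, hwj]; omega
        · rw [m2, m3, hw1]; omega
lemma coe_rot {m : ℕ} (σ : Equiv.Perm (Fin (m+1))) (r : Fin (m+1)) :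
    ⇑((Equiv.addRight r).trans σ) = rotSeq (⇑σ) r := rfl

lemma last_add (m : ℕ) (p : Fin (m+1)) : Fin.last m + (p + 1) = p := by
  rw [add_comm (Fin.last m) (p+1), add_assoc, add_comm 1 (Fin.last m), Fin.last_add_one,
    add_zero]

lemma rot_self {m : ℕ} (σ : Fin (m+1) → Fin (m+1)) : rotSeq σ 0 = σ := by
  funext i
  show σ (i + 0) = σ i
  rw [add_zero]

theorem main_thm (n : ℕ) (hn : 5 ≤ n) :
    (AvClasses n fun σ => CycAvoids σ ![1,2,3,4] ∧ CycAvoids σ ![1,2,4,3] ∧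
      CycAvoids σ ![1,3,4,2]).ncard = 2 := by
  obtain ⟨m, rfl⟩ : ∃ m, n = m + 1 := ⟨n-1, by omega⟩
  have hm : 4 ≤ m := by omega
  have hne : CycClass (⇑(rperm (m+1))) ≠ CycClass (⇑(tperm (m+1))) := by
    intro h
    have hmem : ⇑(tperm (m+1)) ∈ CycClass (⇑(tperm (m+1))) := ⟨0, rot_self _⟩
    rw [← h] at hmem
    obtain ⟨s, hs⟩ := hmem
    have h0 : (rotSeq (⇑(rperm (m+1))) s 0 : ℕ) = ((tperm (m+1)) 0 : ℕ) := by
      rw [congrFun hs 0]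
    have h1 : (rotSeq (⇑(rperm (m+1))) s 1 : ℕ) = ((tperm (m+1)) 1 : ℕ) := by
      rw [congrFun hs 1]
    have e0 : (rotSeq (⇑(rperm (m+1))) s 0 : ℕ) = m + 1 - 1 - ((0 + s : Fin (m+1)) : ℕ) := by
      show ((rperm (m+1) (0 + s) : Fin (m+1)) : ℕ) = _
      rw [rperm_val]
    have e1 : (rotSeq (⇑(rperm (m+1))) s 1 : ℕ) = m + 1 - 1 - ((1 + s : Fin (m+1)) : ℕ) := by
      show ((rperm (m+1) (1 + s) : Fin (m+1)) : ℕ) = _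
      rw [rperm_val]
    have f0 : ((0 + s : Fin (m+1)) : ℕ) = (s : ℕ) := by rw [zero_add]
    have t0 : ((tperm (m+1)) 0 : ℕ) = 0 := by
      rw [tperm_val]
      show t2fun (m+1) ((0 : Fin (m+1)) : ℕ) = 0
      rw [Fin.val_zero]
      unfold t2fun
      rw [if_pos rfl]
    have t1 : ((tperm (m+1)) 1 : ℕ) = m - 1 := by
      rw [tperm_val]
      show t2fun (m+1) ((1 : Fin (m+1)) : ℕ) = m - 1
      rw [Fin.val_one', Nat.mod_eq_of_lt (show (1:ℕ) < m+1 from by omega)]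
      unfold t2fun
      rw [if_neg (by omega), if_neg (by omega)]
      omega
    rw [e0, f0, t0] at h0
    rw [e1, t1] at h1
    have hs0 : (s : ℕ) = m := by have := s.isLt; omega
    have f1 : ((1 + s : Fin (m+1)) : ℕ) = 0 := by
      rw [Fin.val_add, Fin.val_one', hs0, Nat.mod_eq_of_lt (show 1 < m+1 by omega),
        show 1 + m = m + 1 from by omega, Nat.mod_self]
    rw [f1] at h1
    omega
  have main : (AvClasses (m+1) fun σ => CycAvoids σ ![1,2,3,4] ∧ CycAvoids σ ![1,2,4,3] ∧
      CycAvoids σ ![1,3,4,2]) =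
      {CycClass (⇑(rperm (m+1))), CycClass (⇑(tperm (m+1)))} := by
    ext C
    simp only [AvClasses, Set.mem_setOf_eq, Set.mem_insert_iff, Set.mem_singleton_iff]
    constructor
    · rintro ⟨σ, rfl, hA, hB, hC⟩
      -- the rotation taking the maximum to the last position
      have hτA : CycAvoids (⇑((Equiv.addRight (σ.symm (Fin.last m) + 1)).trans σ))
          ![1,2,3,4] := by
        rw [coe_rot]
        intro hc
        exact hA ((cycContains_rot (⇑σ) _ _).mp hc)
      have hτB : CycAvoids (⇑((Equiv.addRight (σ.symm (Fin.last m) + 1)).trans σ))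
          ![1,2,4,3] := by
        rw [coe_rot]
        intro hc
        exact hB ((cycContains_rot (⇑σ) _ _).mp hc)
      have hτC : CycAvoids (⇑((Equiv.addRight (σ.symm (Fin.last m) + 1)).trans σ))
          ![1,3,4,2] := by
        rw [coe_rot]
        intro hc
        exact hC ((cycContains_rot (⇑σ) _ _).mp hc)
      have hmaxτ : V (m+1) (⇑((Equiv.addRight (σ.symm (Fin.last m) + 1)).trans σ))
          (m+1-1) = m+1-1 := by
        rw [V_eq _ (by omega)]
        show ((σ ((⟨m+1-1, by omega⟩ : Fin (m+1)) + (σ.symm (Fin.last m) + 1))) : ℕ) = m+1-1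
        have e : (⟨m+1-1, by omega⟩ : Fin (m+1)) = Fin.last m := rfl
        rw [e, last_add, Equiv.apply_symm_apply]
        rfl
      rcases classify (by omega) _ hmaxτ hτA hτB hτC with hL | hR
      · left
        have hfun : ⇑((Equiv.addRight (σ.symm (Fin.last m) + 1)).trans σ) =
            rotSeq (⇑(rperm (m+1))) 1 := by
          funext i
          apply Fin.ext
          have h1 := hL i.val i.isLt
          rw [V_eq _ i.isLt, Fin.eta] at h1
          rw [h1]
          show r1fun (m+1) i.val = ((rperm (m+1) (i + 1) : Fin (m+1)) : ℕ)
          rw [rperm_val]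
          have hv : ((i + 1 : Fin (m+1)) : ℕ) = (i.val + 1 % (m+1)) % (m+1) := by
            rw [Fin.val_add, Fin.val_one']
          have e1 : (1 : ℕ) % (m+1) = 1 := Nat.mod_eq_of_lt (by omega)
          rcases Nat.lt_or_ge (i.val + 1) (m+1) with hlt | hge
          · rw [hv, e1, Nat.mod_eq_of_lt hlt]
            unfold r1fun
            rw [if_neg (by have := i.isLt; omega)]
            omega
          · have him : i.val = m := by have := i.isLt; omega
            rw [hv, e1, show i.val + 1 = m + 1 from by omega, Nat.mod_self]
            unfold r1fun
            rw [if_pos (by omega)]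
            omega
        calc CycClass ⇑σ = CycClass (rotSeq (⇑σ) (σ.symm (Fin.last m) + 1)) :=
              (cycClass_rot (⇑σ) _).symm
          _ = CycClass (⇑((Equiv.addRight (σ.symm (Fin.last m) + 1)).trans σ)) := by
              rw [coe_rot]
          _ = CycClass (rotSeq (⇑(rperm (m+1))) 1) := by rw [hfun]
          _ = CycClass (⇑(rperm (m+1))) := cycClass_rot _ _
      · right
        have hfun : ⇑((Equiv.addRight (σ.symm (Fin.last m) + 1)).trans σ) =
            ⇑(tperm (m+1)) := by
          funext i
          apply Fin.ext
          have h1 := hR i.val i.isLt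
          rw [V_eq _ i.isLt, Fin.eta] at h1
          rw [h1, tperm_val]
        calc CycClass ⇑σ = CycClass (rotSeq (⇑σ) (σ.symm (Fin.last m) + 1)) :=
              (cycClass_rot (⇑σ) _).symm
          _ = CycClass (⇑((Equiv.addRight (σ.symm (Fin.last m) + 1)).trans σ)) := by
              rw [coe_rot]
          _ = CycClass (⇑(tperm (m+1))) := by rw [hfun]
    · rintro (rfl | rfl)
      · exact ⟨rperm (m+1), rfl, rperm_avoids (by omega)⟩
      · exact ⟨tperm (m+1), rfl, tperm_avoids (by omega)⟩
  rw [main]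
  exact Set.ncard_pair hne
end CycProof

theorem card_av_1234_1243_1342 (n : ℕ) (hn : 5 ≤ n) :
    (AvClasses n fun σ => CycAvoids σ ![1,2,3,4] ∧ CycAvoids σ ![1,2,4,3] ∧ CycAvoids σ ![1,3,4,2]).ncard = 2 := by
  exact CycProof.main_thm n hn
end

section
/- For every integer n ≥ 2, the number of cyclic permutations of length n avoiding all three cyclic patterns [1234], [1342], and [1423] equals n−1; that is, #Av_n([1234],[1342],[1423]) = n−1. -/
/- ## Auxiliary notions -/

def cycN (x y z : ℕ) : Prop := (x < y ∧ y < z) ∨ (y < z ∧ z < x) ∨ (z < x ∧ x < y)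

def cyc {n : ℕ} (a b c : Fin n) : Prop := cycN a.val b.val c.val

def Good {n : ℕ} (σ : Fin n → Fin n) : Prop :=
  ∀ a b c : Fin n, cyc a b c → σ a < σ b → σ b < σ c → (σ a).val = 0

lemma fin_add_val {n : ℕ} (a b : Fin n) :
    (a + b).val = a.val + b.val ∨ (a + b).val + n = a.val + b.val := by
  rw [Fin.add_def]
  rcases Nat.lt_or_ge (a.val + b.val) n with h | h
  · left; simp [Nat.mod_eq_of_lt h]
  · right
    have ha := a.isLt; have hb := b.isLt
    have : (a.val + b.val) % n = a.val + b.val - n := by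
      rw [Nat.mod_eq_sub_mod h, Nat.mod_eq_of_lt (by omega)]
    simp [this]; omega

lemma fin_sub_val {n : ℕ} (a b : Fin n) :
    (a - b).val + b.val = a.val ∨ (a - b).val + b.val = a.val + n := by
  have ha := a.isLt; have hb := b.isLt
  rw [Fin.sub_def]
  simp only [Fin.val_mk]
  rcases Nat.lt_or_ge (n - b.val + a.val) n with h | h
  · right; rw [Nat.mod_eq_of_lt h]; omega
  · left
    rw [Nat.mod_eq_sub_mod h, Nat.mod_eq_of_lt (by omega)]
    omega

lemma natlem_sac (n x s a b : ℕ) (hx : x < n) (ha : a < n)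
    (h1 : x = s + b ∨ x + n = s + b) (h2 : s + b = a ∨ s + b = a + n) : x = a := by
  omega

lemma fin_sub_add_cancel {n : ℕ} (a b : Fin n) : a - b + b = a :=
  Fin.ext (natlem_sac n _ _ _ _ (a - b + b).isLt a.isLt
    (fin_add_val (a - b) b) (fin_sub_val a b))

lemma cycN_shift (n xa xb xc a b c t : ℕ)
    (la : xa < n) (lb : xb < n) (lc : xc < n)
    (ba : a < n) (bb : b < n) (bc : c < n)
    (da : xa = a + t ∨ xa + n = a + t)
    (db : xb = b + t ∨ xb + n = b + t)
    (dc : xc = c + t ∨ xc + n = c + t)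
    (h : cycN a b c) : cycN xa xb xc := by
  unfold cycN at h ⊢; omega

lemma cycN_unshift (n xa xb xc a b c t : ℕ)
    (la : xa < n) (lb : xb < n) (lc : xc < n)
    (ba : a < n) (bb : b < n) (bc : c < n)
    (da : xa + t = a ∨ xa + t = a + n)
    (db : xb + t = b ∨ xb + t = b + n)
    (dc : xc + t = c ∨ xc + t = c + n)
    (h : cycN a b c) : cycN xa xb xc := by
  unfold cycN at h ⊢; omega

lemma cyc_shift {n : ℕ} {a b c : Fin n} (t : Fin n) (h : cyc a b c) :
    cyc (a + t) (b + t) (c + t) :=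
  cycN_shift n _ _ _ a.val b.val c.val t.val (a+t).isLt (b+t).isLt (c+t).isLt
    a.isLt b.isLt c.isLt (fin_add_val a t) (fin_add_val b t) (fin_add_val c t) h

lemma cyc_unshift {n : ℕ} {a b c : Fin n} (t : Fin n) (h : cyc a b c) :
    cyc (a - t) (b - t) (c - t) :=
  cycN_unshift n _ _ _ a.val b.val c.val t.val (a-t).isLt (b-t).isLt (c-t).isLt
    a.isLt b.isLt c.isLt (fin_sub_val a t) (fin_sub_val b t) (fin_sub_val c t) h

lemma good_rot {n : ℕ} {σ : Fin n → Fin n} (hg : Good σ) (t : Fin n) :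
    Good (rotSeq σ t) := fun a b c h h1 h2 => hg _ _ _ (cyc_shift t h) h1 h2

/- ## Good implies avoidance -/

lemma strictMono4 {n : ℕ} {a b c d : Fin n} (h1 : a < b) (h2 : b < c) (h3 : c < d) :
    StrictMono ![a, b, c, d] := by
  intro i j hij
  fin_cases i <;> fin_cases j <;>
    first
      | exact absurd hij (by decide)
      | exact h1
      | exact h2
      | exact h3
      | exact h1.trans h2
      | exact h2.trans h3
      | exact (h1.trans h2).trans h3

lemma good_avoids_1234 {n : ℕ} {σ : Fin n → Fin n} (hg : Good σ) :
    CycAvoids σ ![1,2,3,4] := by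
  rintro ⟨r, f, hm, hiff⟩
  have h01 : σ (f 0 + r) < σ (f 1 + r) := (hiff 0 1).mp (by decide)
  have h12 : σ (f 1 + r) < σ (f 2 + r) := (hiff 1 2).mp (by decide)
  have h23 : σ (f 2 + r) < σ (f 3 + r) := (hiff 2 3).mp (by decide)
  have hc : cyc (f 1) (f 2) (f 3) :=
    Or.inl ⟨hm (show (1:Fin 4) < 2 by decide), hm (show (2:Fin 4) < 3 by decide)⟩
  have h0 := hg _ _ _ (cyc_shift r hc) h12 h23
  have := Fin.lt_def.mp h01
  omega

lemma good_avoids_1342 {n : ℕ} {σ : Fin n → Fin n} (hg : Good σ) :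
    CycAvoids σ ![1,3,4,2] := by
  rintro ⟨r, f, hm, hiff⟩
  have h03 : σ (f 0 + r) < σ (f 3 + r) := (hiff 0 3).mp (by decide)
  have h31 : σ (f 3 + r) < σ (f 1 + r) := (hiff 3 1).mp (by decide)
  have h12 : σ (f 1 + r) < σ (f 2 + r) := (hiff 1 2).mp (by decide)
  have hc : cyc (f 3) (f 1) (f 2) :=
    Or.inr (Or.inl ⟨hm (show (1:Fin 4) < 2 by decide), hm (show (2:Fin 4) < 3 by decide)⟩)
  have h0 := hg _ _ _ (cyc_shift r hc) h31 h12
  have := Fin.lt_def.mp h03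
  omega

lemma good_avoids_1423 {n : ℕ} {σ : Fin n → Fin n} (hg : Good σ) :
    CycAvoids σ ![1,4,2,3] := by
  rintro ⟨r, f, hm, hiff⟩
  have h02 : σ (f 0 + r) < σ (f 2 + r) := (hiff 0 2).mp (by decide)
  have h23 : σ (f 2 + r) < σ (f 3 + r) := (hiff 2 3).mp (by decide)
  have h31 : σ (f 3 + r) < σ (f 1 + r) := (hiff 3 1).mp (by decide)
  have hc : cyc (f 2) (f 3) (f 1) :=
    Or.inr (Or.inr ⟨hm (show (1:Fin 4) < 2 by decide), hm (show (2:Fin 4) < 3 by decide)⟩)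
  have h0 := hg _ _ _ (cyc_shift r hc) h23 h31
  have := Fin.lt_def.mp h02
  omega

/- ## Avoidance implies Good -/

lemma natlemz (n x z pv : ℕ) (hx : x < n) (hp : pv < n) (hz : z = 0)
    (h : x = z + pv ∨ x + n = z + pv) : x = pv := by omega

lemma zero_mk_add {n : ℕ} (hn : 0 < n) (p : Fin n) : (⟨0, hn⟩ : Fin n) + p = p :=
  Fin.ext (natlemz n _ _ _ ((⟨0, hn⟩ : Fin n) + p).isLt p.isLt rfl
    (fin_add_val ⟨0, hn⟩ p))

lemma avoids_good {n : ℕ} (σ : Equiv.Perm (Fin n))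
    (hA1 : CycAvoids ⇑σ ![1,2,3,4]) (hA2 : CycAvoids ⇑σ ![1,3,4,2])
    (hA3 : CycAvoids ⇑σ ![1,4,2,3]) : Good ⇑σ := by
  intro a b c hcyc hab hbc
  by_contra h0
  have hn : 0 < n := a.pos
  obtain ⟨p, hp⟩ := σ.surjective ⟨0, hn⟩
  set A := a - p with hA
  set B := b - p with hB
  set C := c - p with hC
  have hAp : A + p = a := fin_sub_add_cancel a p
  have hBp : B + p = b := fin_sub_add_cancel b p
  have hCp : C + p = c := fin_sub_add_cancel c p
  have hvab : (σ a).val < (σ b).val := hab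
  have hvbc : (σ b).val < (σ c).val := hbc
  have hva : (σ a).val ≠ 0 := h0
  have hap : a ≠ p := fun h => h0 (by rw [h, hp])
  have hbp : b ≠ p := fun h => by rw [h, hp] at hvab; simp at hvab
  have hcp : c ≠ p := fun h => by rw [h, hp] at hvbc; simp at hvbc
  have keyne : ∀ x : Fin n, x - p + p = x → x ≠ p → (x - p).val ≠ 0 := by
    intro x hxp hxne h
    apply hxne
    apply Fin.ext
    have hd := fin_add_val (x - p) p
    rw [hxp] at hd
    have := p.isLt; have := x.isLt
    omega
  have hAne : A.val ≠ 0 := keyne a hAp hap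
  have hBne : B.val ≠ 0 := keyne b hBp hbp
  have hCne : C.val ≠ 0 := keyne c hCp hcp
  have hcyc' : cyc A B C := cyc_unshift p hcyc
  have e0 : rotSeq ⇑σ p ⟨0, hn⟩ = (⟨0, hn⟩ : Fin n) := by
    show σ ((⟨0, hn⟩ : Fin n) + p) = _
    rw [zero_mk_add hn p, hp]
  have ea : rotSeq ⇑σ p A = σ a := by show σ (A + p) = σ a; rw [hAp]
  have eb : rotSeq ⇑σ p B = σ b := by show σ (B + p) = σ b; rw [hBp]
  have ec : rotSeq ⇑σ p C = σ c := by show σ (C + p) = σ c; rw [hCp]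
  rcases hcyc' with h' | h' | h'
  · -- A < B < C : pattern 1234
    apply hA1
    refine ⟨p, ![⟨0, hn⟩, A, B, C], strictMono4 ?_ ?_ ?_, ?_⟩
    · rw [Fin.lt_def]; simp; omega
    · rw [Fin.lt_def]; omega
    · rw [Fin.lt_def]; omega
    · intro i j
      fin_cases i <;> fin_cases j <;>
        simp <;> (try simp only [e0, ea, eb, ec, Fin.lt_def, Fin.le_def]) <;> omega
  · -- B < C < A : pattern 1342 at positions (0, B, C, A) with values (0, σb, σc, σa)
    apply hA2
    refine ⟨p, ![⟨0, hn⟩, B, C, A], strictMono4 ?_ ?_ ?_, ?_⟩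
    · rw [Fin.lt_def]; simp; omega
    · rw [Fin.lt_def]; omega
    · rw [Fin.lt_def]; omega
    · intro i j
      fin_cases i <;> fin_cases j <;>
        simp <;> (try simp only [e0, ea, eb, ec, Fin.lt_def, Fin.le_def]) <;> omega
  · -- C < A < B : pattern 1423 at positions (0, C, A, B) with values (0, σc, σa, σb)
    apply hA3
    refine ⟨p, ![⟨0, hn⟩, C, A, B], strictMono4 ?_ ?_ ?_, ?_⟩
    · rw [Fin.lt_def]; simp; omega
    · rw [Fin.lt_def]; omega
    · rw [Fin.lt_def]; omega
    · intro i j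
      fin_cases i <;> fin_cases j <;>
        simp <;> (try simp only [e0, ea, eb, ec, Fin.lt_def, Fin.le_def]) <;> omega

/- ## Classification of Good permutations fixing 0 -/

def cval (n m j : ℕ) : ℕ := if j = 0 then 0 else if j ≤ m then m + 1 - j else n + m - j

lemma classify {n : ℕ} (hn : 2 ≤ n) (σ : Fin n → Fin n)
    (hinj : Function.Injective σ) (hsurj : Function.Surjective σ)
    (h00 : (σ ⟨0, by omega⟩).val = 0) (hg : Good σ) :
    ∃ m, 1 ≤ m ∧ m ≤ n - 1 ∧ ∀ i : Fin n, (σ i).val = cval n m i.val := by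
  have hne : ∀ i : Fin n, i.val ≠ 0 → (σ i).val ≠ 0 := by
    intro i h hv
    apply h
    have h2 : σ i = σ ⟨0, by omega⟩ := Fin.ext (by rw [hv, h00])
    have h3 := hinj h2
    rw [h3]
  have h1n : 1 < n := by omega
  set m := (σ ⟨1, h1n⟩).val with hm
  have hm1 : 1 ≤ m := Nat.pos_of_ne_zero (hne ⟨1, h1n⟩ (show (1:ℕ) ≠ 0 by omega))
  have hm2 : m ≤ n - 1 := by have := (σ ⟨1, h1n⟩).isLt; omega
  have getk : ∀ v : ℕ, 1 ≤ v → v ≤ n - 1 → ∃ k : Fin n, (σ k).val = v ∧ k.val ≠ 0 := by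
    intro v h1 h2
    obtain ⟨k, hk⟩ := hsurj ⟨v, by omega⟩
    have hkv : (σ k).val = v := by rw [hk]
    refine ⟨k, hkv, ?_⟩
    intro h
    have : k = ⟨0, by omega⟩ := Fin.ext h
    rw [this] at hkv
    omega
  have step : ∀ (i : ℕ) (hx : i < n) (hy : i + 1 < n), 1 ≤ i → i + 1 ≤ n - 1 →
      (σ ⟨i+1, hy⟩).val = if (σ ⟨i, hx⟩).val = 1 then n - 1 else (σ ⟨i, hx⟩).val - 1 := by
    intro i hx hy h1 h2
    set x : Fin n := ⟨i, hx⟩ with hxd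
    set y : Fin n := ⟨i+1, hy⟩ with hyd
    have hxv : x.val = i := rfl
    have hyv : y.val = i + 1 := rfl
    set A := (σ x).val with hA
    set B := (σ y).val with hB
    have hAne : A ≠ 0 := hne x (by omega)
    have hBne : B ≠ 0 := hne y (by omega)
    have hAlt : A < n := (σ x).isLt
    have hBlt : B < n := (σ y).isLt
    have hAB : A ≠ B := by
      intro h
      have h2 : σ x = σ y := Fin.ext (by omega)
      have h3 := hinj h2
      rw [hxd, hyd] at h3
      have := congrArg Fin.val h3
      simp at this
    have claimA : A < B → A = 1 := by
      intro hgt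
      by_contra hA1
      obtain ⟨k, hk, hk0⟩ := getk (A - 1) (by omega) (by omega)
      have hki : k ≠ x := by intro h; rw [h] at hk; omega
      have hki1 : k ≠ y := by intro h; rw [h] at hk; omega
      have hkvi : k.val ≠ i := fun h => hki (Fin.ext h)
      have hkvi1 : k.val ≠ i + 1 := fun h => hki1 (Fin.ext h)
      have hcyc : cyc k x y := by
        unfold cyc cycN
        have := k.isLt
        omega
      have := hg k x y hcyc (Fin.lt_def.mpr (by omega)) (Fin.lt_def.mpr (by omega))
      omega
    have claimB : A < B → B = n - 1 := by
      intro hgt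
      by_contra hB1
      obtain ⟨k, hk, hk0⟩ := getk (B + 1) (by omega) (by omega)
      have hki : k ≠ x := by intro h; rw [h] at hk; omega
      have hki1 : k ≠ y := by intro h; rw [h] at hk; omega
      have hkvi : k.val ≠ i := fun h => hki (Fin.ext h)
      have hkvi1 : k.val ≠ i + 1 := fun h => hki1 (Fin.ext h)
      have hcyc : cyc x y k := by
        unfold cyc cycN
        have := k.isLt
        omega
      have := hg x y k hcyc (Fin.lt_def.mpr (by omega)) (Fin.lt_def.mpr (by omega))
      omega
    have claimC : B < A → B = A - 1 := by
      intro hgt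
      by_contra hC1
      obtain ⟨k, hk, hk0⟩ := getk (B + 1) (by omega) (by omega)
      have hki : k ≠ x := by intro h; rw [h] at hk; omega
      have hki1 : k ≠ y := by intro h; rw [h] at hk; omega
      have hkvi : k.val ≠ i := fun h => hki (Fin.ext h)
      have hkvi1 : k.val ≠ i + 1 := fun h => hki1 (Fin.ext h)
      have hcyc : cyc y k x := by
        unfold cyc cycN
        have := k.isLt
        omega
      have := hg y k x hcyc (Fin.lt_def.mpr (by omega)) (Fin.lt_def.mpr (by omega))
      omega
    rcases Nat.lt_trichotomy A B with h | h | h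
    · have h1' := claimA h
      have h2' := claimB h
      split_ifs <;> omega
    · exact absurd h hAB
    · have h3' := claimC h
      split_ifs <;> omega
  have main : ∀ i : ℕ, 1 ≤ i → ∀ (h : i < n), i ≤ n - 1 → (σ ⟨i, h⟩).val = cval n m i := by
    intro i
    induction i with
    | zero => intro h1; omega
    | succ i ih =>
      intro h1 h hle
      rcases Nat.eq_or_lt_of_le h1 with he | hlt
      · have he' : i = 0 := by omega
        subst he'
        have : (σ ⟨0+1, h⟩).val = m := rfl
        rw [this]
        unfold cval
        have : (0+1 : ℕ) ≤ m := hm1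
        simp only [if_neg (by omega : ¬ (0+1 : ℕ) = 0), if_pos this]
        omega
      · have hx : i < n := by omega
        have hih := ih (by omega) hx (by omega)
        have hstep := step i hx h (by omega) (by omega)
        rw [hstep, hih]
        unfold cval
        split_ifs <;> (try contradiction) <;> omega
  refine ⟨m, hm1, hm2, ?_⟩
  intro iF
  rcases Nat.eq_zero_or_pos iF.val with h | h
  · have h2 := h00
    rw [show (⟨0, by omega⟩ : Fin n) = iF from Fin.ext h.symm] at h2
    rw [h2, h]
    unfold cval
    simp
  · have := main iF.val h iF.isLt (by have := iF.isLt; omega)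
    rwa [Fin.eta] at this

/- ## The canonical permutations -/

def canonf (n m : ℕ) : Fin n → Fin n :=
  fun i => ⟨cval n m i.val % n, Nat.mod_lt _ i.pos⟩

lemma cval_lt {n m j : ℕ} (hm1 : 1 ≤ m) (hm2 : m ≤ n - 1) (hn : 2 ≤ n) (hj : j < n) :
    cval n m j < n := by
  unfold cval; split_ifs <;> omega

lemma canonf_val {n m : ℕ} (hm1 : 1 ≤ m) (hm2 : m ≤ n - 1) (hn : 2 ≤ n) (i : Fin n) :
    (canonf n m i).val = cval n m i.val :=
  Nat.mod_eq_of_lt (cval_lt hm1 hm2 hn i.isLt)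

lemma cval_invol {n m j : ℕ} (hm1 : 1 ≤ m) (hm2 : m ≤ n - 1) (hn : 2 ≤ n) (hj : j < n) :
    cval n m (cval n m j) = j := by
  unfold cval; split_ifs <;> omega

lemma canonf_invol {n m : ℕ} (hm1 : 1 ≤ m) (hm2 : m ≤ n - 1) (hn : 2 ≤ n) :
    Function.Involutive (canonf n m) := by
  intro i
  apply Fin.ext
  rw [canonf_val hm1 hm2 hn, canonf_val hm1 hm2 hn, cval_invol hm1 hm2 hn i.isLt]

lemma canonf_good {n m : ℕ} (hm1 : 1 ≤ m) (hm2 : m ≤ n - 1) (hn : 2 ≤ n) :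
    Good (canonf n m) := by
  intro a b c hcyc h1 h2
  rw [canonf_val hm1 hm2 hn]
  have h1' : cval n m a.val < cval n m b.val := by
    have := Fin.lt_def.mp h1
    rwa [canonf_val hm1 hm2 hn, canonf_val hm1 hm2 hn] at this
  have h2' : cval n m b.val < cval n m c.val := by
    have := Fin.lt_def.mp h2
    rwa [canonf_val hm1 hm2 hn, canonf_val hm1 hm2 hn] at this
  have ha := a.isLt; have hb := b.isLt; have hc := c.isLt
  unfold cyc cycN at hcyc
  unfold cval at h1' h2' ⊢
  split_ifs at h1' h2' ⊢ <;> omega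

/- ## Rotation lemmas -/

lemma natlemz2 (n x z pv : ℕ) (hx : x < n) (hp : pv < n) (hz : z = 0)
    (h : x = pv + z ∨ x + n = pv + z) : x = pv := by omega

lemma add_zero_mk {n : ℕ} (hn : 0 < n) (p : Fin n) : p + ⟨0, hn⟩ = p :=
  Fin.ext (natlemz2 n _ _ _ (p + ⟨0, hn⟩).isLt p.isLt rfl (fin_add_val p ⟨0, hn⟩))

lemma rot_zero {n : ℕ} (hn : 0 < n) (σ : Fin n → Fin n) : rotSeq σ ⟨0, hn⟩ = σ :=
  funext fun i => by show σ (i + ⟨0, hn⟩) = σ i; rw [add_zero_mk hn i]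

lemma rot_rot {n : ℕ} [NeZero n] (σ : Fin n → Fin n) (t r : Fin n) :
    rotSeq (rotSeq σ t) r = rotSeq σ (r + t) :=
  funext fun i => by show σ ((i + r) + t) = σ (i + (r + t)); rw [add_assoc]

lemma cycClass_rot {n : ℕ} [NeZero n] (σ : Fin n → Fin n) (t : Fin n) :
    CycClass (rotSeq σ t) = CycClass σ := by
  unfold CycClass
  ext g
  constructor
  · rintro ⟨r, rfl⟩
    exact ⟨r + t, (rot_rot σ t r).symm⟩
  · rintro ⟨r, rfl⟩
    exact ⟨r - t, by rw [rot_rot, fin_sub_add_cancel]⟩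

/- ## Main theorem -/


theorem card_av_1234_1342_1423 (n : ℕ) (hn : 2 ≤ n) :
    (AvClasses n fun σ => CycAvoids σ ![1,2,3,4] ∧ CycAvoids σ ![1,3,4,2] ∧ CycAvoids σ ![1,4,2,3]).ncard = n - 1 := by
  haveI : NeZero n := ⟨by omega⟩
  have hn0 : 0 < n := by omega
  have himage : (AvClasses n fun σ => CycAvoids σ ![1,2,3,4] ∧ CycAvoids σ ![1,3,4,2] ∧ CycAvoids σ ![1,4,2,3])
      = (fun m => CycClass (canonf n m)) '' Set.Icc 1 (n-1) := by
    ext C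
    constructor
    · rintro ⟨σ, rfl, hA1, hA2, hA3⟩
      have hg := avoids_good σ hA1 hA2 hA3
      obtain ⟨p, hp⟩ := σ.surjective ⟨0, hn0⟩
      set τ := rotSeq ⇑σ p with hτ
      have hgτ : Good τ := good_rot hg p
      have hbij : Function.Bijective τ :=
        Function.Bijective.comp σ.bijective (Equiv.addRight p).bijective
      have hτ0 : (τ ⟨0, hn0⟩).val = 0 := by
        show (σ ((⟨0, hn0⟩ : Fin n) + p)).val = 0
        rw [zero_mk_add hn0 p, hp]
      obtain ⟨m, hm1, hm2, hv⟩ := classify hn τ hbij.injective hbij.surjective hτ0 hgτ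
      have hτeq : τ = canonf n m :=
        funext fun i => Fin.ext (by rw [hv i, canonf_val hm1 hm2 hn])
      refine ⟨m, Set.mem_Icc.mpr ⟨hm1, hm2⟩, ?_⟩
      show CycClass (canonf n m) = CycClass ⇑σ
      rw [← hτeq, hτ, cycClass_rot]
    · rintro ⟨m, hmIcc, rfl⟩
      rw [Set.mem_Icc] at hmIcc
      refine ⟨Equiv.ofBijective (canonf n m) (canonf_invol hmIcc.1 hmIcc.2 hn).bijective,
        rfl, ?_, ?_, ?_⟩
      · exact good_avoids_1234 (canonf_good hmIcc.1 hmIcc.2 hn)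
      · exact good_avoids_1342 (canonf_good hmIcc.1 hmIcc.2 hn)
      · exact good_avoids_1423 (canonf_good hmIcc.1 hmIcc.2 hn)
  have hinjOn : Set.InjOn (fun m => CycClass (canonf n m)) (Set.Icc 1 (n-1)) := by
    rintro m1 hm1' m2 hm2' heq
    rw [Set.mem_Icc] at hm1' hm2'
    have heq' : CycClass (canonf n m1) = CycClass (canonf n m2) := heq
    have h2 : canonf n m2 ∈ CycClass (canonf n m2) := ⟨⟨0, hn0⟩, rot_zero hn0 _⟩
    rw [← heq'] at h2
    obtain ⟨r, hr⟩ := h2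
    have e1 := congrFun hr ⟨0, hn0⟩
    have e1' : (canonf n m1 ((⟨0, hn0⟩ : Fin n) + r)).val = (canonf n m2 ⟨0, hn0⟩).val :=
      congrArg Fin.val e1
    rw [zero_mk_add hn0 r] at e1'
    rw [canonf_val hm1'.1 hm1'.2 hn, canonf_val hm2'.1 hm2'.2 hn] at e1'
    have hzv : ((⟨0, hn0⟩ : Fin n)).val = 0 := rfl
    have hr0 : r.val = 0 := by
      have := r.isLt
      have h1' := hm1'.1; have h1'' := hm1'.2; have h2' := hm2'.1; have h2'' := hm2'.2
      unfold cval at e1'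
      split_ifs at e1' <;> (try contradiction) <;> omega
    have hre : r = ⟨0, hn0⟩ := Fin.ext hr0
    rw [hre, rot_zero hn0] at hr
    have h1n : 1 < n := by omega
    have e2 := congrArg Fin.val (congrFun hr ⟨1, h1n⟩)
    have hov : ((⟨1, h1n⟩ : Fin n)).val = 1 := rfl
    rw [canonf_val hm1'.1 hm1'.2 hn, canonf_val hm2'.1 hm2'.2 hn] at e2
    have h1' := hm1'.1; have h1'' := hm1'.2; have h2' := hm2'.1; have h2'' := hm2'.2
    unfold cval at e2
    split_ifs at e2 <;> (try contradiction) <;> omega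
  rw [himage, Set.ncard_image_of_injOn hinjOn, Set.ncard_eq_toFinset_card']
  simp [Nat.card_Icc]
end
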